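/- arXiv:2001.06167 — 8 statements merged into one kernel-verified Lean document; each statement's English description precedes it below -/
import Mathlib

section
/- Let m ≥ 1, n = 2m, and k ≥ 0 an integer. In ℝ^m with the standard inner product, set δ = (m−1/2, m−3/2, …, 1/2) (i.e. δ_i = m−i+1/2) and λ = (k+1/2, 1/2, …, 1/2) (first entry k+1/2, all other entries 1/2). Then the Weyl dimension product over the positive roots of B_m, namely ∏_{1≤i<j≤m} [⟨λ+δ, e_i−e_j⟩·⟨λ+δ, e_i+e_j⟩ / (⟨δ, e_i−e_j⟩·⟨δ, e_i+e_j⟩)] · ∏_{i=1}^{m} [⟨λ+δ, e_i⟩ / ⟨δ, e_i⟩], equals 2^m · C(k+n−1, k), where C denotes the binomial coefficient and e_1, …, e_m is the standard basis of ℝ^m. -/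
open Finset

private theorem RS_tele_div (c : ℝ) (hc : 0 < c) : ∀ L : ℕ, ∏ t ∈ range L, (c+1+t)/(c+t) = (c+L)/c := by
  intro L
  induction L with
  | zero => simp [div_self (ne_of_gt hc)]
  | succ L ih =>
    rw [Finset.prod_range_succ, ih]
    have h1 : c + (L:ℝ) ≠ 0 := by positivity
    have h2 : c ≠ 0 := ne_of_gt hc
    field_simp
    push_cast; ring

private theorem RS_choose_prodR (k : ℕ) : ∀ n : ℕ, ∏ t ∈ range n, ((k:ℝ)+1+t)/(1+t) = ((k+n).choose k : ℝ) := by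
  intro n
  induction n with
  | zero => simp
  | succ n ih =>
    rw [Finset.prod_range_succ, ih]
    have h := Nat.add_one_mul_choose_eq (k+n) n
    have hsymm : (k+n).choose k = (k+n).choose n := by
      rw [Nat.choose_symm_add]
    have hsymm2 : (k+(n+1)).choose k = (k+n+1).choose (n+1) := by
      have := Nat.choose_symm (show k ≤ k+n+1 by omega)
      rw [show k+n+1-k = n+1 by omega] at this
      rw [show k+(n+1) = k+n+1 by ring, ← this]
    have hne : (1:ℝ) + n ≠ 0 := by positivity
    rw [hsymm, hsymm2]
    have hcast : ((k+n+1 : ℕ):ℝ) * ((k+n).choose n : ℝ) = ((k+n+1).choose (n+1) : ℝ) * ((n+1:ℕ):ℝ) := by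
      exact_mod_cast congrArg (Nat.cast : ℕ → ℝ) h
    field_simp
    push_cast at hcast ⊢
    linarith [hcast]

private theorem RS_helper (s k : ℕ) (F Δ : ℕ → ℝ)
    (hF : ∀ i, F i = (if i = 0 then (k:ℝ) + 1/2 else 1/2) + (((s:ℝ)+1) - i - 1/2))
    (hΔ : ∀ i, Δ i = ((s:ℝ)+1) - i - 1/2) :
    (∏ i ∈ range (s+1), ∏ j ∈ range (s+1), if i < j then
        ((F i - F j) * (F i + F j)) / ((Δ i - Δ j) * (Δ i + Δ j)) else 1)
      * (∏ i ∈ range (s+1), F i / Δ i)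
      = 2^(s+1) * (((k+(2*s+1)).choose k : ℕ) : ℝ) := by
  set q : ℕ → ℕ → ℝ := fun i j => ((F i - F j) * (F i + F j)) / ((Δ i - Δ j) * (Δ i + Δ j)) with hq
  have hIco : ∀ a : ℕ, (∏ j ∈ range (s+1), if a < j then q a j else 1)
      = ∏ j ∈ Ico (a+1) (s+1), q a j := by
    intro a
    rw [← Finset.prod_filter]
    congr 1
    ext j
    simp only [Finset.mem_filter, Finset.mem_Ico, Finset.mem_range]
    omega
  have h3 : (∏ i ∈ range (s+1), ∏ j ∈ range (s+1), if i < j then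
        ((F i - F j) * (F i + F j)) / ((Δ i - Δ j) * (Δ i + Δ j)) else 1)
      = ∏ i ∈ range (s+1), ∏ j ∈ Ico (i+1) (s+1), q i j :=
    Finset.prod_congr rfl fun i _ => hIco i
  rw [h3, Finset.prod_range_succ' (fun i => ∏ j ∈ Ico (i+1) (s+1), q i j) s,
      Finset.prod_range_succ' (fun i => F i / Δ i) s]
  -- evaluate inner products at i+1
  have hinner : ∀ i ∈ range s, (∏ j ∈ Ico (i+1+1) (s+1), q (i+1) j)
      = (2*(s:ℝ)-2*i-1)/((s:ℝ)-i) := by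
    intro i hi
    rw [Finset.mem_range] at hi
    rw [Finset.prod_Ico_eq_prod_range]
    have hL : s + 1 - (i+1+1) = s - i - 1 := by omega
    rw [hL]
    have hcast : ((s - i - 1 : ℕ) : ℝ) = (s:ℝ) - i - 1 := by
      rw [Nat.cast_sub (by omega), Nat.cast_sub (by omega)]
      push_cast; ring
    have hc : (0:ℝ) < (s:ℝ) - i := by
      have : (i:ℝ) + 1 ≤ s := by exact_mod_cast hi
      linarith
    have hrefl := Finset.prod_range_reflect (fun t => ((s:ℝ)-i+1+t)/((s:ℝ)-i+t)) (s-i-1)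
    have hpt : ∀ t ∈ range (s-i-1), q (i+1) (i+1+1+t)
        = ((s:ℝ)-i+1+((s-i-1-1-t : ℕ):ℝ))/((s:ℝ)-i+((s-i-1-1-t : ℕ):ℝ)) := by
      intro t ht
      rw [Finset.mem_range] at ht
      have htc : ((s - i - 1 - 1 - t : ℕ) : ℝ) = (s:ℝ) - i - 2 - t := by
        rw [Nat.cast_sub (by omega), Nat.cast_sub (by omega), Nat.cast_sub (by omega),
            Nat.cast_sub (by omega)]
        push_cast; ring
      rw [htc]
      have h1 : (1:ℝ) + t ≠ 0 := by positivity
      have step1 : q (i+1) (i+1+1+t)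
          = ((1+(t:ℝ))*(2*(s:ℝ)-2*i-1-t))/((1+(t:ℝ))*(2*(s:ℝ)-2*i-2-t)) := by
        simp only [hq, hF, hΔ, if_neg (Nat.succ_ne_zero i),
          if_neg (by omega : ¬ i + 1 + 1 + t = 0)]
        congr 1 <;> push_cast <;> ring
      rw [step1, mul_div_mul_left _ _ h1]
      congr 1 <;> ring
    rw [Finset.prod_congr rfl hpt, hrefl, RS_tele_div _ hc, hcast]
    ring_nf
  -- singles at i+1
  have hsingle : ∀ i ∈ range s, F (i+1) / Δ (i+1) = ((s:ℝ)-i)/((s:ℝ)-i-1/2) := by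
    intro i _
    rw [hF, hΔ, if_neg (Nat.succ_ne_zero i)]
    congr 1 <;> push_cast <;> ring
  have hcomb : (∏ i ∈ range s, ∏ j ∈ Ico (i+1+1) (s+1), q (i+1) j)
      * (∏ i ∈ range s, F (i+1) / Δ (i+1)) = 2^s := by
    rw [Finset.prod_congr rfl hinner, Finset.prod_congr rfl hsingle, ← Finset.prod_mul_distrib]
    have h2 : ∀ i ∈ range s, (2*(s:ℝ)-2*i-1)/((s:ℝ)-i) * (((s:ℝ)-i)/((s:ℝ)-i-1/2)) = 2 := by
      intro i hi
      rw [Finset.mem_range] at hi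
      have hile : (i:ℝ) + 1 ≤ s := by exact_mod_cast hi
      have hb : (s:ℝ) - i ≠ 0 := by intro h; linarith
      have hc : (s:ℝ) - i - 1/2 ≠ 0 := by intro h; linarith
      rw [div_mul_div_comm, div_eq_iff (mul_ne_zero hb hc)]
      ring
    rw [Finset.prod_congr rfl h2, Finset.prod_const, Finset.card_range]

  -- i = 0 inner product
  have hzero : (∏ j ∈ Ico (0+1) (s+1), q 0 j)
      = ((∏ t ∈ range s, ((k:ℝ)+1+t)) * (∏ t ∈ range s, ((k:ℝ)+(s:ℝ)+2+t)))
        / ((∏ t ∈ range s, ((1:ℝ)+t)) * (∏ t ∈ range s, ((s:ℝ)+1+t))) := by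
    rw [Finset.prod_Ico_eq_prod_range]
    have hpt : ∀ t ∈ range (s+1-(0+1)), q 0 (0+1+t)
        = (((k:ℝ)+1+t)*((k:ℝ)+2*s+1-t)) / (((1:ℝ)+t)*(2*(s:ℝ)-t)) := by
      intro t ht
      simp only [hq, hF, hΔ, if_pos rfl, if_neg (by omega : ¬ 0+1+t = 0)]
      congr 1 <;> push_cast <;> ring
    rw [Finset.prod_congr rfl hpt, show s+1-(0+1) = s by omega, Finset.prod_div_distrib,
        Finset.prod_mul_distrib, Finset.prod_mul_distrib]
    have hrefl2 : ∏ t ∈ range s, ((k:ℝ)+2*s+1-t) = ∏ t ∈ range s, ((k:ℝ)+(s:ℝ)+2+t) := by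
      rw [← Finset.prod_range_reflect (fun t => (k:ℝ)+(s:ℝ)+2+t) s]
      refine Finset.prod_congr rfl fun t ht => ?_
      rw [Finset.mem_range] at ht
      rw [Nat.cast_sub (by omega : t ≤ s-1), Nat.cast_sub (by omega : 1 ≤ s)]
      push_cast; ring
    have hrefl3 : ∏ t ∈ range s, (2*(s:ℝ)-t) = ∏ t ∈ range s, ((s:ℝ)+1+t) := by
      rw [← Finset.prod_range_reflect (fun t => (s:ℝ)+1+t) s]
      refine Finset.prod_congr rfl fun t ht => ?_
      rw [Finset.mem_range] at ht
      rw [Nat.cast_sub (by omega : t ≤ s-1), Nat.cast_sub (by omega : 1 ≤ s)]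
      push_cast; ring
    rw [hrefl2, hrefl3]
  have hP : (∏ t ∈ range (2*s+1), ((k:ℝ)+1+t))
      = (∏ t ∈ range s, ((k:ℝ)+1+t)) * ((k:ℝ)+1+s) * (∏ t ∈ range s, ((k:ℝ)+(s:ℝ)+2+t)) := by
    rw [show 2*s+1 = (s+1)+s by ring, Finset.prod_range_add, Finset.prod_range_succ]
    congr 1
    refine Finset.prod_congr rfl fun t ht => ?_
    push_cast; ring
  have hDP : (∏ t ∈ range (2*s+1), ((1:ℝ)+t))
      = (∏ t ∈ range s, ((1:ℝ)+t)) * ((1:ℝ)+s) * (∏ t ∈ range s, ((s:ℝ)+2+t)) := by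
    rw [show 2*s+1 = (s+1)+s by ring, Finset.prod_range_add, Finset.prod_range_succ]
    congr 1
    refine Finset.prod_congr rfl fun t ht => ?_
    push_cast; ring
  have hQ2 : (∏ t ∈ range s, ((s:ℝ)+1+t)) * (2*(s:ℝ)+1)
      = ((s:ℝ)+1) * (∏ t ∈ range s, ((s:ℝ)+2+t)) := by
    have e1 := Finset.prod_range_succ (fun t => (s:ℝ)+1+t) s
    have e2 := Finset.prod_range_succ' (fun t => (s:ℝ)+1+t) s
    have e3 : (∏ t ∈ range s, ((s:ℝ)+1+((t+1:ℕ):ℝ))) = ∏ t ∈ range s, ((s:ℝ)+2+t) :=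
      Finset.prod_congr rfl fun t _ => by push_cast; ring
    rw [e2, e3] at e1
    push_cast at e1 ⊢
    linear_combination -e1
  have hCprod := RS_choose_prodR k (2*s+1)
  rw [Finset.prod_div_distrib] at hCprod
  have hD1pos : (0:ℝ) < ∏ t ∈ range s, ((1:ℝ)+t) := Finset.prod_pos fun t _ => by positivity
  have hD2pos : (0:ℝ) < ∏ t ∈ range s, ((s:ℝ)+1+t) := Finset.prod_pos fun t _ => by positivity
  have hQpos : (0:ℝ) < ∏ t ∈ range s, ((s:ℝ)+2+t) := Finset.prod_pos fun t _ => by positivity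
  have key : (((k+(2*s+1)).choose k : ℕ) : ℝ)
        * ((∏ t ∈ range s, ((1:ℝ)+t)) * (∏ t ∈ range s, ((s:ℝ)+1+t)) * (2*(s:ℝ)+1))
      = (∏ t ∈ range s, ((k:ℝ)+1+t)) * (∏ t ∈ range s, ((k:ℝ)+(s:ℝ)+2+t)) * ((k:ℝ)+1+s) := by
    have hden : (∏ t ∈ range s, ((1:ℝ)+t)) * ((1:ℝ)+(s:ℕ)) * (∏ t ∈ range s, ((s:ℝ)+2+t)) ≠ 0 := by
      have : (0:ℝ) < (1:ℝ)+(s:ℕ) := by positivity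
      positivity
    have hCeq : (((k+(2*s+1)).choose k : ℕ) : ℝ)
          * ((∏ t ∈ range s, ((1:ℝ)+t)) * ((1:ℝ)+s) * (∏ t ∈ range s, ((s:ℝ)+2+t)))
        = (∏ t ∈ range s, ((k:ℝ)+1+t)) * ((k:ℝ)+1+s) * (∏ t ∈ range s, ((k:ℝ)+(s:ℝ)+2+t)) := by
      rw [← hCprod, hDP, hP]
      rw [div_mul_cancel₀]
      exact hden
    calc (((k+(2*s+1)).choose k : ℕ) : ℝ)
          * ((∏ t ∈ range s, ((1:ℝ)+t)) * (∏ t ∈ range s, ((s:ℝ)+1+t)) * (2*(s:ℝ)+1))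
        = (((k+(2*s+1)).choose k : ℕ) : ℝ)
          * ((∏ t ∈ range s, ((1:ℝ)+t)) * ((∏ t ∈ range s, ((s:ℝ)+1+t)) * (2*(s:ℝ)+1))) := by
          ring
      _ = (((k+(2*s+1)).choose k : ℕ) : ℝ)
          * ((∏ t ∈ range s, ((1:ℝ)+t)) * (((s:ℝ)+1) * (∏ t ∈ range s, ((s:ℝ)+2+t)))) := by
          rw [hQ2]
      _ = (((k+(2*s+1)).choose k : ℕ) : ℝ)
          * ((∏ t ∈ range s, ((1:ℝ)+t)) * ((1:ℝ)+s) * (∏ t ∈ range s, ((s:ℝ)+2+t))) := by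
          ring
      _ = (∏ t ∈ range s, ((k:ℝ)+1+t)) * ((k:ℝ)+1+s) * (∏ t ∈ range s, ((k:ℝ)+(s:ℝ)+2+t)) := hCeq
      _ = (∏ t ∈ range s, ((k:ℝ)+1+t)) * (∏ t ∈ range s, ((k:ℝ)+(s:ℝ)+2+t)) * ((k:ℝ)+1+s) := by
          ring
  have hF0 : F 0 / Δ 0 = ((k:ℝ)+1+s)/((s:ℝ)+1/2) := by
    rw [hF, hΔ, if_pos rfl]
    congr 1 <;> push_cast <;> ring
  rw [hzero, hF0, mul_mul_mul_comm, hcomb, div_mul_div_comm]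
  have hneden : ((∏ t ∈ range s, ((1:ℝ)+t)) * (∏ t ∈ range s, ((s:ℝ)+1+t))) * ((s:ℝ)+1/2) ≠ 0 := by
    positivity
  rw [mul_div_assoc', div_eq_iff hneden]
  linear_combination -(2:ℝ)^s * key


/-- Weyl dimension formula for `so(2m+1)` (type `B_m`) with highest weight
`λ = (k+1/2, (1/2)_{m-1})` and `δ = (m-1/2, m-3/2, …, 1/2)`: the product over the
positive roots `e_i ± e_j (i < j)` and `e_i` equals `2^m · C(k+n-1, k)` with `n = 2m`. -/
theorem sphere_multiplicity_imP_even (m k : ℕ) (hm : 1 ≤ m) :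
    let δ : Fin m → ℝ := fun i => (m : ℝ) - (i : ℕ) - 1 / 2
    let lam : Fin m → ℝ := fun i => if (i : ℕ) = 0 then (k : ℝ) + 1 / 2 else 1 / 2
    let f : Fin m → ℝ := fun i => lam i + δ i
    (∏ i, ∏ j, if i < j then
        ((f i - f j) * (f i + f j)) / ((δ i - δ j) * (δ i + δ j)) else 1)
      * (∏ i, f i / δ i)
      = 2 ^ m * (Nat.choose (k + 2 * m - 1) k : ℝ) := by
  intro δ lam f
  obtain ⟨s, rfl⟩ : ∃ s : ℕ, m = s + 1 := ⟨m - 1, by omega⟩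
  set F : ℕ → ℝ := fun i => (if i = 0 then (k:ℝ) + 1/2 else 1/2) + (((s:ℝ)+1) - i - 1/2) with hF
  set Δ : ℕ → ℝ := fun i => ((s:ℝ)+1) - i - 1/2 with hΔ
  have hδ : ∀ i : Fin (s+1), δ i = Δ (i:ℕ) := by
    intro i
    simp only [δ, Δ, hΔ]
    push_cast
    ring
  have hf : ∀ i : Fin (s+1), f i = F (i:ℕ) := by
    intro i
    simp only [f, lam, δ, F, hF]
    congr 1
    push_cast
    ring
  have h1 : (∏ i : Fin (s+1), ∏ j : Fin (s+1), if i < j then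
        ((f i - f j) * (f i + f j)) / ((δ i - δ j) * (δ i + δ j)) else 1)
      = ∏ i ∈ Finset.range (s+1), ∏ j ∈ Finset.range (s+1), if i < j then
        ((F i - F j) * (F i + F j)) / ((Δ i - Δ j) * (Δ i + Δ j)) else 1 := by
    rw [← Fin.prod_univ_eq_prod_range (fun i => ∏ j ∈ Finset.range (s+1), if i < j then
        ((F i - F j) * (F i + F j)) / ((Δ i - Δ j) * (Δ i + Δ j)) else 1) (s+1)]
    refine Finset.prod_congr rfl fun i _ => ?_
    rw [← Fin.prod_univ_eq_prod_range (fun j => if (i:ℕ) < j then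
        ((F i - F j) * (F i + F j)) / ((Δ i - Δ j) * (Δ i + Δ j)) else 1) (s+1)]
    refine Finset.prod_congr rfl fun j _ => ?_
    simp only [hf, hδ, Fin.lt_def]
  have h2 : (∏ i : Fin (s+1), f i / δ i) = ∏ i ∈ Finset.range (s+1), F i / Δ i := by
    rw [← Fin.prod_univ_eq_prod_range (fun i => F i / Δ i) (s+1)]
    exact Finset.prod_congr rfl fun i _ => by rw [hf, hδ]
  rw [h1, h2, RS_helper s k F Δ (fun i => rfl) (fun i => rfl),
      show k + 2*(s+1) - 1 = k + (2*s+1) by omega]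
end

section
/- Let m ≥ 2, n = 2m−1, k ≥ 0 an integer, and σ ∈ {+1, −1}. In ℝ^m with the standard inner product, set δ = (m−1, m−2, …, 1, 0) (i.e. δ_i = m−i) and λ = (k+1/2, 1/2, …, 1/2, σ·1/2) (first entry k+1/2, entries 2 through m−1 equal to 1/2, last entry σ/2). Then the Weyl dimension product over the positive roots of D_m, namely ∏_{1≤i<j≤m} [⟨λ+δ, e_i−e_j⟩·⟨λ+δ, e_i+e_j⟩ / (⟨δ, e_i−e_j⟩·⟨δ, e_i+e_j⟩)], equals 2^{m−1} · C(k+n−1, k), where C denotes the binomial coefficient and e_1, …, e_m is the standard basis of ℝ^m. -/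
open Finset

lemma tel_inc (a : ℝ) (ha : 0 < a) (n : ℕ) :
    ∏ s ∈ range n, (a + s + 1) / (a + s) = (a + n) / a := by
  induction n with
  | zero => simp [div_self ha.ne']
  | succ n ih =>
    rw [prod_range_succ, ih]
    have h1 : a + (n:ℝ) ≠ 0 := by positivity
    rw [div_mul_div_comm, mul_comm a (a + (n:ℝ)), mul_div_mul_left _ _ h1]
    push_cast
    ring_nf

lemma tel_dec (b : ℝ) (n : ℕ) (hb : (n:ℝ) < b) :
    ∏ s ∈ range n, (b - s) / (b - 1 - s) = b / (b - n) := by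
  induction n with
  | zero =>
    have : b ≠ 0 := by push_cast at hb; linarith
    simp [div_self this]
  | succ n ih =>
    have hn : (n:ℝ) < b := by push_cast at hb ⊢; linarith
    rw [prod_range_succ, ih hn]
    have h1 : b - (n:ℝ) ≠ 0 := by linarith
    rw [div_mul_div_comm, mul_comm b (b - (n:ℝ)), mul_div_mul_left _ _ h1]
    push_cast
    ring_nf

lemma claim1 (m : ℕ) (hm : 2 ≤ m) (k : ℕ) :
    ∏ j ∈ Ico 1 m, ((k:ℝ) + j) * ((k:ℝ) + 2 * m - 1 - j) / ((j:ℝ) * (2 * (m:ℝ) - 2 - j))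
      = 2 * (Nat.choose (k + 2 * m - 2) k : ℝ) := by
  have hmR : (2:ℝ) ≤ (m:ℝ) := by exact_mod_cast hm
  have hm1 : ((m - 1 : ℕ) : ℝ) = (m:ℝ) - 1 := by
    rw [Nat.cast_sub (by omega)]; norm_num
  induction k with
  | zero =>
    have hstep : ∀ j ∈ Ico 1 m,
        (((0:ℕ):ℝ) + j) * (((0:ℕ):ℝ) + 2 * m - 1 - j) / ((j:ℝ) * (2 * (m:ℝ) - 2 - j))
          = (2 * (m:ℝ) - 1 - j) / (2 * (m:ℝ) - 2 - j) := by
      intro j hj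
      rw [mem_Ico] at hj
      have hj0 : (j:ℝ) ≠ 0 := Nat.cast_ne_zero.mpr (by omega)
      rw [show (((0:ℕ):ℝ) + j) * (((0:ℕ):ℝ) + 2 * m - 1 - j)
            = (j:ℝ) * (2 * (m:ℝ) - 1 - j) by push_cast; ring,
        mul_div_mul_left _ _ hj0]
    rw [prod_congr rfl hstep, prod_Ico_eq_prod_range]
    rw [prod_congr rfl (fun s _ => by
      push_cast
      ring_nf :
      ∀ s ∈ range (m - 1), (2 * (m:ℝ) - 1 - (↑(1 + s))) / (2 * (m:ℝ) - 2 - (↑(1 + s)))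
        = ((2 * (m:ℝ) - 2) - s) / ((2 * (m:ℝ) - 2) - 1 - s))]
    rw [tel_dec (2 * (m:ℝ) - 2) (m - 1) (by rw [hm1]; linarith)]
    rw [hm1, Nat.choose_zero_right]
    have hne : 2 * (m:ℝ) - 2 - ((m:ℝ) - 1) ≠ 0 := by intro h; nlinarith
    rw [div_eq_iff hne]
    push_cast
    ring
  | succ k ih =>
    have hfac : ∀ j ∈ Ico 1 m,
        (((k+1:ℕ):ℝ) + j) * (((k+1:ℕ):ℝ) + 2 * m - 1 - j) / ((j:ℝ) * (2 * (m:ℝ) - 2 - j))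
          = ((k:ℝ) + j) * ((k:ℝ) + 2 * m - 1 - j) / ((j:ℝ) * (2 * (m:ℝ) - 2 - j))
            * ((((k:ℝ) + 1 + j) / ((k:ℝ) + j)) * (((k:ℝ) + 2 * m - j) / ((k:ℝ) + 2 * m - 1 - j))) := by
      intro j hj
      rw [mem_Ico] at hj
      have h1 : (k:ℝ) + j ≠ 0 := by
        have : (1:ℝ) ≤ (j:ℝ) := by exact_mod_cast hj.1
        have := Nat.cast_nonneg (α := ℝ) k
        linarith
      have hjR : (j:ℝ) ≤ (m:ℝ) - 1 := by
        have : (j:ℝ) + 1 ≤ (m:ℝ) := by exact_mod_cast hj.2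
        linarith
      have h2 : (k:ℝ) + 2 * m - 1 - j ≠ 0 := by
        have : (0:ℝ) ≤ (k:ℝ) := Nat.cast_nonneg k
        intro h; nlinarith
      have h3 : (j:ℝ) ≠ 0 := Nat.cast_ne_zero.mpr (by omega)
      have h4 : 2 * (m:ℝ) - 2 - j ≠ 0 := by intro h; nlinarith
      field_simp
      push_cast
      ring
    rw [prod_congr rfl hfac, prod_mul_distrib, ih, prod_mul_distrib]
    have hr1 : ∏ j ∈ Ico 1 m, ((k:ℝ) + 1 + j) / ((k:ℝ) + j) = ((k:ℝ) + m) / ((k:ℝ) + 1) := by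
      rw [prod_Ico_eq_prod_range]
      rw [prod_congr rfl (fun s _ => by push_cast; ring_nf :
        ∀ s ∈ range (m - 1), ((k:ℝ) + 1 + (↑(1 + s))) / ((k:ℝ) + (↑(1 + s)))
          = (((k:ℝ) + 1) + s + 1) / (((k:ℝ) + 1) + s))]
      rw [tel_inc ((k:ℝ) + 1) (by positivity) (m - 1), hm1]
      congr 1
      ring
    have hr2 : ∏ j ∈ Ico 1 m, ((k:ℝ) + 2 * m - j) / ((k:ℝ) + 2 * m - 1 - j)
        = ((k:ℝ) + 2 * m - 1) / ((k:ℝ) + m) := by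
      rw [prod_Ico_eq_prod_range]
      rw [prod_congr rfl (fun s _ => by push_cast; ring_nf :
        ∀ s ∈ range (m - 1), ((k:ℝ) + 2 * m - (↑(1 + s))) / ((k:ℝ) + 2 * m - 1 - (↑(1 + s)))
          = (((k:ℝ) + 2 * m - 1) - s) / (((k:ℝ) + 2 * m - 1) - 1 - s))]
      rw [tel_dec ((k:ℝ) + 2 * m - 1) (m - 1) (by
        rw [hm1]
        have := Nat.cast_nonneg (α := ℝ) k
        linarith), hm1]
      congr 1
      ring
    rw [hr1, hr2]
    have h := Nat.add_one_mul_choose_eq (k + 2 * m - 2) k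
    have hR : ((k + 2 * m - 2 + 1 : ℕ) : ℝ) * (Nat.choose (k + 2 * m - 2) k : ℝ)
        = (Nat.choose (k + 2 * m - 2 + 1) (k + 1) : ℝ) * ((k + 1 : ℕ) : ℝ) := by
      exact_mod_cast h
    rw [show k + 2 * m - 2 + 1 = k + 1 + 2 * m - 2 from by omega] at hR
    rw [show ((k + 1 + 2 * m - 2 : ℕ) : ℝ) = (k:ℝ) + 2 * m - 1 from by
      rw [Nat.cast_sub (by omega)]; push_cast; ring] at hR
    have hk1 : (k:ℝ) + 1 ≠ 0 := by positivity
    have hkm : (k:ℝ) + (m:ℝ) ≠ 0 := by positivity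
    push_cast at hR ⊢
    field_simp
    linear_combination hR

lemma case_i0_mid (M K J : ℝ) :
    ((K + 1 / 2 + (M - 1 - 0) - (1 / 2 + (M - 1 - J))) *
        (K + 1 / 2 + (M - 1 - 0) + (1 / 2 + (M - 1 - J)))) /
      ((M - 1 - 0 - (M - 1 - J)) * (M - 1 - 0 + (M - 1 - J)))
    = (K + J) * (K + 2 * M - 1 - J) / (J * (2 * M - 2 - J)) := by
  congr 1 <;> ring

lemma case_i0_top (M K s : ℝ) (hs : s ^ 2 = 1) :
    ((K + 1 / 2 + (M - 1 - 0) - (s / 2 + (M - 1 - (M - 1)))) *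
        (K + 1 / 2 + (M - 1 - 0) + (s / 2 + (M - 1 - (M - 1))))) /
      ((M - 1 - 0 - (M - 1 - (M - 1))) * (M - 1 - 0 + (M - 1 - (M - 1))))
    = (K + (M - 1)) * (K + 2 * M - 1 - (M - 1)) / ((M - 1) * (2 * M - 2 - (M - 1))) := by
  congr 1
  · linear_combination (-(1/4 : ℝ)) * hs
  · ring

lemma case_mid (M I J : ℝ) (hIJ : J - I ≠ 0) :
    ((1 / 2 + (M - 1 - I) - (1 / 2 + (M - 1 - J))) *
        (1 / 2 + (M - 1 - I) + (1 / 2 + (M - 1 - J)))) /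
      ((M - 1 - I - (M - 1 - J)) * (M - 1 - I + (M - 1 - J)))
    = (2 * M - 1 - I - J) / (2 * M - 2 - I - J) := by
  rw [show (1 / 2 + (M - 1 - I) - (1 / 2 + (M - 1 - J))) *
        (1 / 2 + (M - 1 - I) + (1 / 2 + (M - 1 - J)))
      = (J - I) * (2 * M - 1 - I - J) by ring,
    show (M - 1 - I - (M - 1 - J)) * (M - 1 - I + (M - 1 - J))
      = (J - I) * (2 * M - 2 - I - J) by ring,
    mul_div_mul_left _ _ hIJ]

lemma case_mid_top (M I s : ℝ) (hs : s ^ 2 = 1) (hne : M - 1 - I ≠ 0) :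
    ((1 / 2 + (M - 1 - I) - (s / 2 + (M - 1 - (M - 1)))) *
        (1 / 2 + (M - 1 - I) + (s / 2 + (M - 1 - (M - 1))))) /
      ((M - 1 - I - (M - 1 - (M - 1))) * (M - 1 - I + (M - 1 - (M - 1))))
    = (2 * M - 1 - I - (M - 1)) / (2 * M - 2 - I - (M - 1)) := by
  rw [show (1 / 2 + (M - 1 - I) - (s / 2 + (M - 1 - (M - 1)))) *
        (1 / 2 + (M - 1 - I) + (s / 2 + (M - 1 - (M - 1))))
      = (M - 1 - I) * (2 * M - 1 - I - (M - 1)) by linear_combination (-(1/4 : ℝ)) * hs,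
    show (M - 1 - I - (M - 1 - (M - 1))) * (M - 1 - I + (M - 1 - (M - 1)))
      = (M - 1 - I) * (2 * M - 2 - I - (M - 1)) by ring,
    mul_div_mul_left _ _ hne]

private noncomputable def Ln (m k : ℕ) (σ : ℝ) (i : ℕ) : ℝ :=
  if i = 0 then (k:ℝ) + 1 / 2 else if i = m - 1 then σ / 2 else 1 / 2

private noncomputable def Fn (m k : ℕ) (σ : ℝ) (i : ℕ) : ℝ := Ln m k σ i + ((m:ℝ) - 1 - i)

private lemma key_lemma (m k : ℕ) (hm : 2 ≤ m) (σ : ℝ) (hσ2 : σ ^ 2 = 1) :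
    (∏ i ∈ range m, ∏ j ∈ range m, if i < j then
        ((Fn m k σ i - Fn m k σ j) * (Fn m k σ i + Fn m k σ j)) /
          ((((m:ℝ) - 1 - i) - ((m:ℝ) - 1 - j)) * (((m:ℝ) - 1 - i) + ((m:ℝ) - 1 - j))) else 1)
      = 2 ^ (m - 1) * (Nat.choose (k + 2 * m - 2) k : ℝ) := by
  have hmR : (2:ℝ) ≤ (m:ℝ) := by exact_mod_cast hm
  have hm1 : ((m - 1 : ℕ) : ℝ) = (m:ℝ) - 1 := by
    rw [Nat.cast_sub (by omega)]; norm_num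
  have hrest : (∏ i ∈ Ico 1 m, ∏ j ∈ Ico (i + 1) m,
      (2 * (m:ℝ) - 1 - i - j) / (2 * (m:ℝ) - 2 - i - j)) = 2 ^ (m - 2) := by
    have hin : ∀ i ∈ Ico 1 m, (∏ j ∈ Ico (i + 1) m,
        (2 * (m:ℝ) - 1 - i - j) / (2 * (m:ℝ) - 2 - i - j)) = if i = m - 1 then 1 else 2 := by
      intro i hi
      rw [mem_Ico] at hi
      by_cases htop : i = m - 1
      · rw [if_pos htop, show Ico (i + 1) m = ∅ from Ico_eq_empty (by omega), prod_empty]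
      · rw [if_neg htop, prod_Ico_eq_prod_range]
        have hiR : (i:ℝ) ≤ (m:ℝ) - 2 := by
          have h2 : ((i:ℕ) + 2 : ℕ) ≤ m := by omega
          have := (Nat.cast_le (α := ℝ)).mpr h2
          push_cast at this; linarith
        rw [prod_congr rfl (fun s _ => by push_cast; ring_nf :
          ∀ s ∈ range (m - (i + 1)),
            (2 * (m:ℝ) - 1 - i - (↑(i + 1 + s))) / (2 * (m:ℝ) - 2 - i - (↑(i + 1 + s)))
              = ((2 * (m:ℝ) - 2 - 2 * i) - s) / ((2 * (m:ℝ) - 2 - 2 * i) - 1 - s))]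
        rw [tel_dec (2 * (m:ℝ) - 2 - 2 * i) (m - (i + 1)) (by
          rw [Nat.cast_sub (by omega)]; push_cast; linarith)]
        rw [show ((m - (i + 1) : ℕ) : ℝ) = (m:ℝ) - i - 1 from by
          rw [Nat.cast_sub (by omega)]; push_cast; ring]
        have hne : (0:ℝ) < 2 * (m:ℝ) - 2 - 2 * i - ((m:ℝ) - i - 1) := by linarith
        rw [div_eq_iff hne.ne']
        ring
    rw [prod_congr rfl hin]
    have hsplit : Ico 1 m = insert (m - 1) (Ico 1 (m - 1)) := by
      ext x; simp only [mem_insert, mem_Ico]; omega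
    rw [hsplit, prod_insert (by simp only [mem_Ico]; omega), if_pos rfl, one_mul]
    rw [prod_congr rfl (fun x hx => by
        rw [mem_Ico] at hx; exact if_neg (by omega) :
      ∀ x ∈ Ico 1 (m - 1), (if x = m - 1 then (1:ℝ) else 2) = 2), prod_const, Nat.card_Ico]
    congr 1
  calc (∏ i ∈ range m, ∏ j ∈ range m, if i < j then
        ((Fn m k σ i - Fn m k σ j) * (Fn m k σ i + Fn m k σ j)) /
          ((((m:ℝ) - 1 - i) - ((m:ℝ) - 1 - j)) * (((m:ℝ) - 1 - i) + ((m:ℝ) - 1 - j))) else 1)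
      = ∏ i ∈ range m, ∏ j ∈ Ico (i + 1) m,
          ((Fn m k σ i - Fn m k σ j) * (Fn m k σ i + Fn m k σ j)) /
            ((((m:ℝ) - 1 - i) - ((m:ℝ) - 1 - j)) * (((m:ℝ) - 1 - i) + ((m:ℝ) - 1 - j))) := by
        refine prod_congr rfl fun i hi => ?_
        rw [← prod_filter]
        congr 1
        ext x
        simp only [mem_filter, mem_range, mem_Ico]
        omega
    _ = ∏ i ∈ range m, ∏ j ∈ Ico (i + 1) m,
          (if i = 0 then ((k:ℝ) + j) * ((k:ℝ) + 2 * m - 1 - j) / ((j:ℝ) * (2 * (m:ℝ) - 2 - j))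
           else (2 * (m:ℝ) - 1 - i - j) / (2 * (m:ℝ) - 2 - i - j)) := by
        refine prod_congr rfl fun i hi => prod_congr rfl fun j hj => ?_
        rw [mem_range] at hi
        rw [mem_Ico] at hj
        simp only [Fn, Ln]
        by_cases h0 : i = 0
        · subst h0
          rw [show (if (0:ℕ) = 0 then (k:ℝ) + 1 / 2 else if 0 = m - 1 then σ / 2 else 1 / 2)
              = (k:ℝ) + 1 / 2 from if_pos rfl]
          by_cases hj1 : j = m - 1
          · subst hj1
            rw [show (if m - 1 = 0 then (k:ℝ) + 1 / 2 else if m - 1 = m - 1 then σ / 2 else 1 / 2)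
                = σ / 2 from by rw [if_neg (by omega), if_pos rfl]]
            rw [if_pos rfl, Nat.cast_zero, hm1]
            exact case_i0_top _ _ _ hσ2
          · rw [show (if j = 0 then (k:ℝ) + 1 / 2 else if j = m - 1 then σ / 2 else 1 / 2)
                = 1 / 2 from by rw [if_neg (by omega), if_neg hj1]]
            rw [if_pos rfl, Nat.cast_zero]
            exact case_i0_mid _ _ _
        · rw [show (if i = 0 then (k:ℝ) + 1 / 2 else if i = m - 1 then σ / 2 else 1 / 2)
              = 1 / 2 from by rw [if_neg h0, if_neg (by omega)]]
          rw [if_neg h0]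
          by_cases hj1 : j = m - 1
          · subst hj1
            rw [show (if m - 1 = 0 then (k:ℝ) + 1 / 2 else if m - 1 = m - 1 then σ / 2 else 1 / 2)
                = σ / 2 from by rw [if_neg (by omega), if_pos rfl]]
            rw [hm1]
            refine case_mid_top _ _ _ hσ2 ?_
            have h2 : ((i:ℕ) + 2 : ℕ) ≤ m := by omega
            have := (Nat.cast_le (α := ℝ)).mpr h2
            push_cast at this
            intro hc; linarith
          · rw [show (if j = 0 then (k:ℝ) + 1 / 2 else if j = m - 1 then σ / 2 else 1 / 2)
                = 1 / 2 from by rw [if_neg (by omega), if_neg hj1]]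
            refine case_mid _ _ _ ?_
            have : (i:ℝ) < (j:ℝ) := by exact_mod_cast (by omega : i < j)
            intro hc; linarith
    _ = (∏ j ∈ Ico 1 m, ((k:ℝ) + j) * ((k:ℝ) + 2 * m - 1 - j) / ((j:ℝ) * (2 * (m:ℝ) - 2 - j)))
          * ∏ i ∈ Ico 1 m, ∏ j ∈ Ico (i + 1) m,
              (2 * (m:ℝ) - 1 - i - j) / (2 * (m:ℝ) - 2 - i - j) := by
        rw [range_eq_Ico, prod_eq_prod_Ico_succ_bot (show 0 < m by omega)]
        congr 1
        exact prod_congr rfl fun i hi =>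
          prod_congr rfl fun j _ => if_neg (by rw [mem_Ico] at hi; omega)
    _ = 2 * (Nat.choose (k + 2 * m - 2) k : ℝ) * 2 ^ (m - 2) := by
        rw [claim1 m hm k, hrest]
    _ = 2 ^ (m - 1) * (Nat.choose (k + 2 * m - 2) k : ℝ) := by
        rw [show m - 1 = (m - 2) + 1 from by omega, pow_succ]
        ring

/-- Weyl dimension formula for `so(2m)` (type `D_m`) with highest weight
`λ = (k+1/2, (1/2)_{m-2}, ±1/2)` and `δ = (m-1, m-2, …, 0)`: the product over the
positive roots `e_i ± e_j (i < j)` equals `2^{m-1} · C(k+n-1, k)` with `n = 2m-1`. -/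
theorem sphere_multiplicity_imP_odd (m k : ℕ) (hm : 2 ≤ m) (σ : ℝ) (hσ : σ = 1 ∨ σ = -1) :
    let δ : Fin m → ℝ := fun i => (m : ℝ) - 1 - (i : ℕ)
    let lam : Fin m → ℝ := fun i =>
      if (i : ℕ) = 0 then (k : ℝ) + 1 / 2
      else if (i : ℕ) = m - 1 then σ / 2
      else 1 / 2
    let f : Fin m → ℝ := fun i => lam i + δ i
    (∏ i, ∏ j, if i < j then
        ((f i - f j) * (f i + f j)) / ((δ i - δ j) * (δ i + δ j)) else 1)
      = 2 ^ (m - 1) * (Nat.choose (k + 2 * m - 2) k : ℝ) := by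
  intro δ lam f
  have hσ2 : σ ^ 2 = 1 := by rcases hσ with h | h <;> simp [h]
  refine Eq.trans ?_ (key_lemma m k hm σ hσ2)
  rw [← Fin.prod_univ_eq_prod_range (fun i => ∏ j ∈ range m, if i < j then
      ((Fn m k σ i - Fn m k σ j) * (Fn m k σ i + Fn m k σ j)) /
        ((((m:ℝ) - 1 - i) - ((m:ℝ) - 1 - j)) * (((m:ℝ) - 1 - i) + ((m:ℝ) - 1 - j))) else 1) m]
  refine prod_congr rfl fun i _ => ?_
  rw [← Fin.prod_univ_eq_prod_range (fun j => if (i:ℕ) < j then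
      ((Fn m k σ i - Fn m k σ j) * (Fn m k σ i + Fn m k σ j)) /
        ((((m:ℝ) - 1 - (i:ℕ)) - ((m:ℝ) - 1 - j)) * (((m:ℝ) - 1 - (i:ℕ)) + ((m:ℝ) - 1 - j))) else 1) m]
  refine prod_congr rfl fun j _ => ?_
  simp only [δ, lam, f, Fn, Ln, Fin.lt_def]
end

section
/- Let m ≥ 2, n = 2m, and l ≥ 0 an integer. In ℝ^m with the standard inner product, set δ = (m−1/2, m−3/2, …, 1/2) (i.e. δ_i = m−i+1/2) and λ = (l+3/2, 3/2, 1/2, …, 1/2) (first entry l+3/2, second entry 3/2, remaining m−2 entries 1/2). Then the Weyl dimension product over the positive roots of B_m, namely ∏_{1≤i<j≤m} [⟨λ+δ, e_i−e_j⟩·⟨λ+δ, e_i+e_j⟩ / (⟨δ, e_i−e_j⟩·⟨δ, e_i+e_j⟩)] · ∏_{i=1}^{m} [⟨λ+δ, e_i⟩ / ⟨δ, e_i⟩], equals 2^m · (n−2) · [(l+n+1)(l+1) / ((l+n)(l+2))] · C(l+n, l+1), where C denotes the binomial coefficient and e_1, …, e_m is the standard basis of ℝ^m. -/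
set_option maxHeartbeats 1000000
open Finset Nat


lemma telescope (x : ℝ) (hx : 0 < x) (q : ℕ) : ∏ j ∈ range q, ((x+j+1)/(x+j)) = (x+q)/x := by
  induction q with
  | zero => simp [div_self hx.ne']
  | succ q ih =>
    rw [prod_range_succ, ih]
    have h1 : x + q ≠ 0 := by positivity
    have h2 : x ≠ 0 := hx.ne'
    push_cast
    field_simp
    ring

lemma core (p : ℕ) :
    (∏ i ∈ range p, ∏ j ∈ range p, if j < i then
      (((i:ℝ)+1 - ((j:ℝ)+1)) * (((i:ℝ)+1) + ((j:ℝ)+1))) /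
      ((((i:ℝ)+1/2) - ((j:ℝ)+1/2)) * (((i:ℝ)+1/2) + ((j:ℝ)+1/2))) else 1)
      * ∏ i ∈ range p, (((i:ℝ)+1)/((i:ℝ)+1/2)) = 2 ^ p := by
  induction p with
  | zero => simp
  | succ p ih =>
    rw [prod_range_succ, prod_range_succ]
    have hsplit : ∀ i ∈ range p, (∏ j ∈ range (p+1), if j < i then
        (((i:ℝ)+1 - ((j:ℝ)+1)) * (((i:ℝ)+1) + ((j:ℝ)+1))) /
        ((((i:ℝ)+1/2) - ((j:ℝ)+1/2)) * (((i:ℝ)+1/2) + ((j:ℝ)+1/2))) else 1)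
        = ∏ j ∈ range p, if j < i then
        (((i:ℝ)+1 - ((j:ℝ)+1)) * (((i:ℝ)+1) + ((j:ℝ)+1))) /
        ((((i:ℝ)+1/2) - ((j:ℝ)+1/2)) * (((i:ℝ)+1/2) + ((j:ℝ)+1/2))) else 1 := by
      intro i hi
      rw [prod_range_succ, if_neg (by simp at hi; omega), mul_one]
    rw [prod_congr rfl hsplit, prod_range_succ, if_neg (lt_irrefl p), mul_one]
    have hlast : (∏ j ∈ range p, if j < p then
        (((p:ℝ)+1 - ((j:ℝ)+1)) * (((p:ℝ)+1) + ((j:ℝ)+1))) /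
        ((((p:ℝ)+1/2) - ((j:ℝ)+1/2)) * (((p:ℝ)+1/2) + ((j:ℝ)+1/2))) else 1)
        = ∏ j ∈ range p, ((((p:ℝ)+1)+(j:ℝ)+1)/(((p:ℝ)+1)+(j:ℝ))) := by
      apply prod_congr rfl
      intro j hj
      simp only [mem_range] at hj
      rw [if_pos hj]
      have hlt : (j:ℝ) < p := by exact_mod_cast hj
      have h1 : ((p:ℝ)+1/2 - ((j:ℝ)+1/2)) * ((p:ℝ)+1/2 + ((j:ℝ)+1/2)) ≠ 0 := by
        apply mul_ne_zero
        · intro h; nlinarith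
        · positivity
      have h2 : (p:ℝ)+1+(j:ℝ) ≠ 0 := by positivity
      rw [div_eq_div_iff h1 h2]
      ring
    rw [hlast, telescope ((p:ℝ)+1) (by positivity) p, pow_succ, ← ih]
    have h3 : (p:ℝ)+1 ≠ 0 := by positivity
    have h4 : (p:ℝ)+1/2 ≠ 0 := by positivity
    field_simp
    ring

lemma asc_eval (a : ℕ) (q : ℕ) : ∏ k ∈ range q, ((a:ℝ)+k+1) = (a+q)! / a ! := by
  have ha : ((a ! : ℕ) : ℝ) ≠ 0 := by exact_mod_cast a.factorial_ne_zero
  induction q with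
  | zero => simp [div_self ha]
  | succ q ih =>
    rw [prod_range_succ, ih]
    have : ((a+q+1) ! : ℕ) = (a+q+1) * (a+q)! := Nat.factorial_succ _
    rw [show a + (q+1) = a+q+1 from by omega, this]
    push_cast
    field_simp

lemma desc_eval (a : ℕ) (q : ℕ) : ∏ k ∈ range q, ((a:ℝ)+q-k) = (a+q)! / a ! := by
  rw [← prod_range_reflect]
  rw [← asc_eval a q]
  apply prod_congr rfl
  intro k hk
  simp only [mem_range] at hk
  have h2 : ((q - 1 - k : ℕ) : ℝ) = (q:ℝ) - 1 - k := by
    rw [Nat.cast_sub (by omega : k ≤ q - 1), Nat.cast_sub (by omega : 1 ≤ q)]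
    norm_num
  rw [h2]; ring

lemma prod_add_one (p : ℕ) : ∏ i ∈ range p, ((i:ℝ)+1) = p ! := by
  induction p with
  | zero => simp
  | succ p ih =>
    rw [prod_range_succ, ih, Nat.factorial_succ]
    push_cast; ring

lemma half_prod (p : ℕ) : ∏ i ∈ range p, ((i:ℝ)+1/2) = (2*p)! / (4^p * p !) := by
  induction p with
  | zero => simp
  | succ p ih =>
    rw [prod_range_succ, ih]
    have h1 : (2*(p+1))! = (2*p+2) * ((2*p+1) * (2*p)!) := by
      rw [show 2*(p+1) = 2*p+1+1 from by omega, Nat.factorial_succ, Nat.factorial_succ]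
    have h2 : ((p+1)! : ℕ) = (p+1) * p ! := Nat.factorial_succ _
    rw [h1, h2]
    have hf : ((p ! : ℕ) : ℝ) ≠ 0 := by exact_mod_cast p.factorial_ne_zero
    have h4 : (4:ℝ)^p ≠ 0 := by positivity
    have h2p : ((2*p)! : ℝ) ≠ 0 := by exact_mod_cast (2*p).factorial_ne_zero
    push_cast
    field_simp
    ring

noncomputable def DD (p i : ℕ) : ℝ := (p:ℝ) + 2 - (i:ℝ) - 1/2
noncomputable def FF (p l i : ℕ) : ℝ :=
  (if i = 0 then (l:ℝ) + 3/2 else if i = 1 then 3/2 else 1/2) + DD p i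

lemma key (p l : ℕ) :
    (∏ i ∈ range (p+2), ∏ j ∈ range (p+2), if i < j then
        ((FF p l i - FF p l j) * (FF p l i + FF p l j)) /
        ((DD p i - DD p j) * (DD p i + DD p j)) else 1)
      * (∏ i ∈ range (p+2), FF p l i / DD p i)
      = 2 ^ (p+2) * (2 * ((p:ℝ)+2) - 2)
        * (((l:ℝ) + 2*((p:ℝ)+2) + 1) * ((l:ℝ) + 1) / (((l:ℝ) + 2*((p:ℝ)+2)) * ((l:ℝ) + 2)))
        * (Nat.choose (l + 2 * (p+2)) (l + 1) : ℝ) := by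
  have e1 : ∀ (g : ℕ → ℝ), ∏ i ∈ range (p+2), g i = (∏ i ∈ range p, g (i+2)) * g 1 * g 0 := by
    intro g
    rw [show p+2 = p+1+1 from rfl, prod_range_succ', prod_range_succ']
  simp only [e1]
  have c00 : ¬ ((0:ℕ) < 0) := by omega
  have c10 : ¬ ((1:ℕ) < 0) := by omega
  have c11 : ¬ ((1:ℕ) < 1) := by omega
  have c01 : (0:ℕ) < 1 := by omega
  have ci0 : ∀ i : ℕ, ¬ (i+2 < 0) := by omega
  have ci1 : ∀ i : ℕ, ¬ (i+2 < 1) := by omega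
  have c0j : ∀ j : ℕ, (0 < j+2) := by omega
  have c1j : ∀ j : ℕ, (1 < j+2) := by omega
  simp only [if_neg c00, if_neg c10, if_neg c11, if_pos c01, if_neg (ci0 _), if_neg (ci1 _),
    if_pos (c0j _), if_pos (c1j _), add_lt_add_iff_right, mul_one, one_mul]
  -- evaluate FF/DD shifted terms
  have hFF2 : ∀ x : ℕ, FF p l (x+2) = (p:ℝ) - x := by
    intro x
    simp only [FF, DD, show x+2 ≠ 0 from by omega, show x+2 ≠ 1 from by omega, if_false]
    push_cast; ring
  have hDD2 : ∀ x : ℕ, DD p (x+2) = (p:ℝ) - x - 1/2 := by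
    intro x; simp only [DD]; push_cast; ring
  have hFF0 : FF p l 0 = (l:ℝ) + p + 3 := by simp [FF, DD]; ring
  have hFF1 : FF p l 1 = (p:ℝ) + 2 := by norm_num [FF, DD]; ring
  have hDD0 : DD p 0 = (p:ℝ) + 3/2 := by simp [DD]; ring
  have hDD1 : DD p 1 = (p:ℝ) + 1/2 := by simp [DD]; ring
  simp only [hFF2, hDD2, hFF0, hFF1, hDD0, hDD1]
  -- singles core product
  have hreflS : (∏ x ∈ range p, ((p:ℝ) - ↑x) / ((p:ℝ) - ↑x - 1/2))
      = ∏ i ∈ range p, (((i:ℝ)+1)/((i:ℝ)+1/2)) := by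
    rw [← prod_range_reflect (fun i => (((i:ℝ)+1)/((i:ℝ)+1/2))) p]
    apply prod_congr rfl
    intro x hx; simp only [mem_range] at hx
    have hc : ((p - 1 - x : ℕ) : ℝ) = (p:ℝ) - 1 - x := by
      rw [Nat.cast_sub (by omega), Nat.cast_sub (by omega)]; norm_num
    rw [hc]; ring_nf
  have hfp : ((p ! : ℕ) : ℝ) ≠ 0 := by exact_mod_cast p.factorial_ne_zero
  have hf2p : (((2*p) ! : ℕ) : ℝ) ≠ 0 := by exact_mod_cast (2*p).factorial_ne_zero
  have h4p : (4:ℝ)^p ≠ 0 := by positivity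
  have hSV : (∏ x ∈ range p, ((p:ℝ) - ↑x) / ((p:ℝ) - ↑x - 1/2))
      = 4^p * ((p ! : ℕ) : ℝ)^2 / (((2*p)! : ℕ) : ℝ) := by
    rw [hreflS, prod_div_distrib, prod_add_one, half_prod]
    field_simp
  -- pairs core product
  have hreflP : (∏ x ∈ range p, ∏ x_1 ∈ range p,
        if x < x_1 then
          ((p:ℝ) - ↑x - ((p:ℝ) - ↑x_1)) * ((p:ℝ) - ↑x + ((p:ℝ) - ↑x_1)) /
            (((p:ℝ) - ↑x - 1/2 - ((p:ℝ) - ↑x_1 - 1/2)) * ((p:ℝ) - ↑x - 1/2 + ((p:ℝ) - ↑x_1 - 1/2)))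
        else 1)
      = ∏ i ∈ range p, ∏ j ∈ range p, if j < i then
          (((i:ℝ)+1 - ((j:ℝ)+1)) * (((i:ℝ)+1) + ((j:ℝ)+1))) /
          ((((i:ℝ)+1/2) - ((j:ℝ)+1/2)) * (((i:ℝ)+1/2) + ((j:ℝ)+1/2))) else 1 := by
    rw [← prod_range_reflect (fun i => ∏ j ∈ range p, if j < i then
          (((i:ℝ)+1 - ((j:ℝ)+1)) * (((i:ℝ)+1) + ((j:ℝ)+1))) /
          ((((i:ℝ)+1/2) - ((j:ℝ)+1/2)) * (((i:ℝ)+1/2) + ((j:ℝ)+1/2))) else 1) p]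
    apply prod_congr rfl
    intro x hx; simp only [mem_range] at hx
    rw [← prod_range_reflect (fun j => if j < p - 1 - x then
          (((p - 1 - x : ℕ):ℝ)+1 - ((j:ℝ)+1)) * (((p - 1 - x : ℕ):ℝ)+1 + ((j:ℝ)+1)) /
          (((((p - 1 - x : ℕ):ℝ)+1/2) - ((j:ℝ)+1/2)) * ((((p - 1 - x : ℕ):ℝ)+1/2) + ((j:ℝ)+1/2))) else 1) p]
    apply prod_congr rfl
    intro y hy; simp only [mem_range] at hy
    have hcx : ((p - 1 - x : ℕ) : ℝ) = (p:ℝ) - 1 - x := by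
      rw [Nat.cast_sub (by omega), Nat.cast_sub (by omega)]; norm_num
    have hcy : ((p - 1 - y : ℕ) : ℝ) = (p:ℝ) - 1 - y := by
      rw [Nat.cast_sub (by omega), Nat.cast_sub (by omega)]; norm_num
    by_cases hxy : x < y
    · rw [if_pos hxy, if_pos (show p - 1 - y < p - 1 - x by omega), hcx, hcy]
      have hy' : (y:ℝ) < p := by exact_mod_cast hy
      have hx' : (x:ℝ) < p := by exact_mod_cast hx
      ring
    · rw [if_neg hxy, if_neg (show ¬ (p - 1 - y < p - 1 - x) by omega)]
  have hPV : (∏ x ∈ range p, ∏ x_1 ∈ range p,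
        if x < x_1 then
          ((p:ℝ) - ↑x - ((p:ℝ) - ↑x_1)) * ((p:ℝ) - ↑x + ((p:ℝ) - ↑x_1)) /
            (((p:ℝ) - ↑x - 1/2 - ((p:ℝ) - ↑x_1 - 1/2)) * ((p:ℝ) - ↑x - 1/2 + ((p:ℝ) - ↑x_1 - 1/2)))
        else 1)
      = 2^p * (((2*p)! : ℕ) : ℝ) / (4^p * ((p ! : ℕ) : ℝ)^2) := by
    have hc := core p
    rw [← hreflP, ← hreflS, hSV] at hc
    rw [mul_div_assoc', div_eq_iff hf2p] at hc
    rw [eq_div_iff (mul_ne_zero h4p (pow_ne_zero 2 hfp))]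
    linear_combination hc
  -- cross with row 1
  have hC1 : (∏ x ∈ range p,
        ((p:ℝ) + 2 - ((p:ℝ) - ↑x)) * ((p:ℝ) + 2 + ((p:ℝ) - ↑x)) /
          (((p:ℝ) + 1/2 - ((p:ℝ) - ↑x - 1/2)) * ((p:ℝ) + 1/2 + ((p:ℝ) - ↑x - 1/2))))
      = ((((1+p)! : ℕ):ℝ) / (((1:ℕ)! : ℕ):ℝ) * ((((p+2)+p)! : ℕ):ℝ) / (((p+2)! : ℕ):ℝ)) /
        ((((0+p)! : ℕ):ℝ) / (((0:ℕ)! : ℕ):ℝ) * ((((p)+p)! : ℕ):ℝ) / (((p)! : ℕ):ℝ)) := by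
    have step : ∀ x ∈ range p,
        ((p:ℝ) + 2 - ((p:ℝ) - ↑x)) * ((p:ℝ) + 2 + ((p:ℝ) - ↑x)) /
          (((p:ℝ) + 1/2 - ((p:ℝ) - ↑x - 1/2)) * ((p:ℝ) + 1/2 + ((p:ℝ) - ↑x - 1/2)))
        = ((((1:ℕ):ℝ) + ↑x + 1) * (((p+2:ℕ):ℝ) + ↑p - ↑x)) /
          ((((0:ℕ):ℝ) + ↑x + 1) * (((p:ℕ):ℝ) + ↑p - ↑x)) := by
      intro x hx; push_cast; ring
    rw [prod_congr rfl step, prod_div_distrib, prod_mul_distrib, prod_mul_distrib,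
      asc_eval 1 p, desc_eval (p+2) p, asc_eval 0 p, desc_eval p p]
    try ring
  -- cross with row 0
  have hC0 : (∏ x ∈ range p,
        ((l:ℝ) + ↑p + 3 - ((p:ℝ) - ↑x)) * ((l:ℝ) + ↑p + 3 + ((p:ℝ) - ↑x)) /
          (((p:ℝ) + 3/2 - ((p:ℝ) - ↑x - 1/2)) * ((p:ℝ) + 3/2 + ((p:ℝ) - ↑x - 1/2))))
      = ((((l+2+p)! : ℕ):ℝ) / (((l+2)! : ℕ):ℝ) * (((((l+p+3)+p)! : ℕ):ℝ) / (((l+p+3)! : ℕ):ℝ))) /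
        ((((1+p)! : ℕ):ℝ) / (((1:ℕ)! : ℕ):ℝ) * (((((p+1)+p)! : ℕ):ℝ) / (((p+1)! : ℕ):ℝ))) := by
    have step : ∀ x ∈ range p,
        ((l:ℝ) + ↑p + 3 - ((p:ℝ) - ↑x)) * ((l:ℝ) + ↑p + 3 + ((p:ℝ) - ↑x)) /
          (((p:ℝ) + 3/2 - ((p:ℝ) - ↑x - 1/2)) * ((p:ℝ) + 3/2 + ((p:ℝ) - ↑x - 1/2)))
        = ((((l+2:ℕ):ℝ) + ↑x + 1) * (((l+p+3:ℕ):ℝ) + ↑p - ↑x)) /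
          ((((1:ℕ):ℝ) + ↑x + 1) * (((p+1:ℕ):ℝ) + ↑p - ↑x)) := by
      intro x hx; push_cast; ring
    rw [prod_congr rfl step, prod_div_distrib, prod_mul_distrib, prod_mul_distrib,
      asc_eval (l+2) p, desc_eval (l+p+3) p, asc_eval 1 p, desc_eval (p+1) p]
    try ring
  rw [hPV, hC1, hC0, hSV]
  rw [Nat.cast_choose ℝ (show l+1 ≤ l+2*(p+2) by omega)]
  rw [show l+2*(p+2) - (l+1) = 2*p+3 from by omega]
  rw [show l+2*(p+2) = l+2*p+4 from by omega]
  rw [show l+p+3+p = l+2*p+3 from by omega]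
  rw [show l+2+p = l+p+2 from by omega]
  rw [show p+1+p = 2*p+1 from by omega]
  rw [show p+2+p = 2*p+2 from by omega]
  rw [show p+p = 2*p from by omega]
  rw [show (1:ℕ)+p = p+1 from by omega]
  rw [show (0:ℕ)+p = p from by omega]
  -- factorial recurrences
  have r1 : (((l+2*p+4)! : ℕ) : ℝ) = ((l:ℝ)+2*p+4) * (((l+2*p+3)! : ℕ) : ℝ) := by
    rw [show l+2*p+4 = (l+2*p+3)+1 from by omega, Nat.factorial_succ]; push_cast; ring
  have r8 : (((2*p+3)! : ℕ) : ℝ) = (2*(p:ℝ)+3) * (((2*p+2)! : ℕ) : ℝ) := by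
    rw [show 2*p+3 = (2*p+2)+1 from by omega, Nat.factorial_succ]; push_cast; ring
  have r7 : (((2*p+2)! : ℕ) : ℝ) = (2*(p:ℝ)+2) * (((2*p+1)! : ℕ) : ℝ) := by
    rw [show 2*p+2 = (2*p+1)+1 from by omega, Nat.factorial_succ]; push_cast; ring
  have r6 : (((2*p+1)! : ℕ) : ℝ) = (2*(p:ℝ)+1) * (((2*p)! : ℕ) : ℝ) := by
    rw [show 2*p+1 = (2*p)+1 from by omega, Nat.factorial_succ]; push_cast; ring
  have r2 : (((l+p+3)! : ℕ) : ℝ) = ((l:ℝ)+(p:ℝ)+3) * (((l+p+2)! : ℕ) : ℝ) := by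
    rw [show l+p+3 = (l+p+2)+1 from by omega, Nat.factorial_succ]; push_cast; ring
  have r3 : (((l+2)! : ℕ) : ℝ) = ((l:ℝ)+2) * (((l+1)! : ℕ) : ℝ) := by
    rw [show l+2 = (l+1)+1 from by omega, Nat.factorial_succ]; push_cast; ring
  have r5 : (((p+2)! : ℕ) : ℝ) = ((p:ℝ)+2) * (((p+1)! : ℕ) : ℝ) := by
    rw [show p+2 = (p+1)+1 from by omega, Nat.factorial_succ]; push_cast; ring
  have r4 : (((p+1)! : ℕ) : ℝ) = ((p:ℝ)+1) * ((p ! : ℕ) : ℝ) := by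
    rw [Nat.factorial_succ]; push_cast; ring
  rw [r1, r8, r7, r6, r2, r3, r5, r4, Nat.factorial_zero, Nat.factorial_one]
  -- nonzero facts
  have n1 : (((l+2*p+3)! : ℕ) : ℝ) ≠ 0 := by exact_mod_cast (l+2*p+3).factorial_ne_zero
  have n2 : (((l+p+2)! : ℕ) : ℝ) ≠ 0 := by exact_mod_cast (l+p+2).factorial_ne_zero
  have n3 : (((l+1)! : ℕ) : ℝ) ≠ 0 := by exact_mod_cast (l+1).factorial_ne_zero
  have n4 : (0:ℝ) < (l:ℝ)+2 := by positivity
  have n5 : (0:ℝ) < (p:ℝ)+1 := by positivity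
  have n6 : (0:ℝ) < (p:ℝ)+2 := by positivity
  have n7 : (0:ℝ) < 2*(p:ℝ)+1 := by positivity
  have n8 : (0:ℝ) < 2*(p:ℝ)+2 := by positivity
  have n9 : (0:ℝ) < 2*(p:ℝ)+3 := by positivity
  have n10 : (0:ℝ) < (l:ℝ)+(p:ℝ)+3 := by positivity
  have n11 : (0:ℝ) < (l:ℝ)+2*p+4 := by positivity
  have n12 : (0:ℝ) < (l:ℝ)+2*(p:ℝ)+2 := by positivity
  have n13 : (2:ℝ)^p ≠ 0 := by positivity
  field_simp
  ring

lemma fin_double (n : ℕ) (g : ℕ → ℕ → ℝ) :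
    (∏ i : Fin n, ∏ j : Fin n, g i j) = ∏ i ∈ range n, ∏ j ∈ range n, g i j := by
  calc (∏ i : Fin n, ∏ j : Fin n, g i j)
      = ∏ i : Fin n, ∏ j ∈ range n, g i j :=
        Fintype.prod_congr _ _ (fun i => Fin.prod_univ_eq_prod_range (g i) n)
    _ = ∏ i ∈ range n, ∏ j ∈ range n, g i j :=
        Fin.prod_univ_eq_prod_range (fun k => ∏ j ∈ range n, g k j) n


/-- Weyl dimension formula for `so(2m+1)` (type `B_m`) with highest weight
`λ = (l+3/2, 3/2, (1/2)_{m-2})` and `δ = (m-1/2, m-3/2, …, 1/2)`: the product over the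
positive roots equals `2^m · (n-2) · ((l+n+1)(l+1)/((l+n)(l+2))) · C(l+n, l+1)`
with `n = 2m`. -/
theorem sphere_multiplicity_kerPstar_even (m l : ℕ) (hm : 2 ≤ m) :
    let n : ℝ := 2 * m
    let δ : Fin m → ℝ := fun i => (m : ℝ) - (i : ℕ) - 1 / 2
    let lam : Fin m → ℝ := fun i =>
      if (i : ℕ) = 0 then (l : ℝ) + 3 / 2
      else if (i : ℕ) = 1 then 3 / 2
      else 1 / 2
    let f : Fin m → ℝ := fun i => lam i + δ i
    (∏ i, ∏ j, if i < j then
        ((f i - f j) * (f i + f j)) / ((δ i - δ j) * (δ i + δ j)) else 1)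
      * (∏ i, f i / δ i)
      = 2 ^ m * (n - 2) * (((l : ℝ) + n + 1) * ((l : ℝ) + 1) / ((((l : ℝ) + n)) * ((l : ℝ) + 2)))
        * (Nat.choose (l + 2 * m) (l + 1) : ℝ) := by
  intro n δ lam f
  obtain ⟨p, rfl⟩ : ∃ p, m = p + 2 := ⟨m - 2, by omega⟩
  have hδ : ∀ i : Fin (p+2), δ i = DD p (i:ℕ) := by
    intro i; simp only [δ, DD]; push_cast; ring
  have hf : ∀ i : Fin (p+2), f i = FF p l (i:ℕ) := by
    intro i
    simp only [f, lam, FF]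
    rw [hδ i]
  have hn : n = 2 * ((p:ℝ)+2) := by simp only [n]; push_cast; ring
  simp only [hf, hδ, Fin.lt_def]
  rw [fin_double (p+2) (fun a b => if a < b then
        ((FF p l a - FF p l b) * (FF p l a + FF p l b)) /
        ((DD p a - DD p b) * (DD p a + DD p b)) else 1)]
  rw [Fin.prod_univ_eq_prod_range (fun k => FF p l k / DD p k) (p+2)]
  rw [key p l, hn]
end

section
/- Let m ≥ 3, n = 2m−1, l ≥ 0 an integer, and σ ∈ {+1, −1}. In ℝ^m with the standard inner product, set δ = (m−1, m−2, …, 1, 0) (i.e. δ_i = m−i) and λ = (l+3/2, 3/2, 1/2, …, 1/2, σ·1/2) (first entry l+3/2, second entry 3/2, entries 3 through m−1 equal to 1/2, last entry σ/2). Then the Weyl dimension product over the positive roots of D_m, namely ∏_{1≤i<j≤m} [⟨λ+δ, e_i−e_j⟩·⟨λ+δ, e_i+e_j⟩ / (⟨δ, e_i−e_j⟩·⟨δ, e_i+e_j⟩)], equals 2^{m−1} · (n−2) · [(l+n+1)(l+1) / ((l+n)(l+2))] · C(l+n, l+1), where C denotes the binomial coefficient and e_1, …, e_m is the standard basis of ℝ^m.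 -/
open Finset Nat

private noncomputable def QQ (R : ℕ → ℕ → ℝ) (m : ℕ) : ℝ :=
  ∏ i ∈ Finset.range m, ∏ j ∈ Finset.range m, if i < j then R i j else 1

private lemma QQ_succ (R : ℕ → ℕ → ℝ) (m : ℕ) :
    QQ R (m + 1) = QQ R m * ∏ i ∈ Finset.range m, R i m := by
  unfold QQ
  rw [Finset.prod_range_succ]
  have h1 : (∏ j ∈ Finset.range (m + 1), if m < j then R m j else 1) = 1 := by
    apply Finset.prod_eq_one
    intro j hj
    rw [if_neg (by have := Finset.mem_range.mp hj; omega)]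
  rw [h1, mul_one, ← Finset.prod_mul_distrib]
  apply Finset.prod_congr rfl
  intro i hi
  rw [Finset.prod_range_succ, if_pos (Finset.mem_range.mp hi)]

private lemma QQ_reverse (R : ℕ → ℕ → ℝ) (hR : ∀ i j, R i j = R j i) (m : ℕ) :
    QQ R m = QQ (fun i j => R (m - 1 - i) (m - 1 - j)) m := by
  unfold QQ
  rw [← Finset.prod_product', ← Finset.prod_product']
  refine Finset.prod_nbij' (fun q => (m - 1 - q.2, m - 1 - q.1))
    (fun q => (m - 1 - q.2, m - 1 - q.1)) ?_ ?_ ?_ ?_ ?_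
  · intro a ha
    simp only [Finset.mem_product, Finset.mem_range] at ha ⊢
    omega
  · intro a ha
    simp only [Finset.mem_product, Finset.mem_range] at ha ⊢
    omega
  · intro a ha
    simp only [Finset.mem_product, Finset.mem_range] at ha
    ext <;> simp <;> omega
  · intro a ha
    simp only [Finset.mem_product, Finset.mem_range] at ha
    ext <;> simp <;> omega
  · intro a ha
    simp only [Finset.mem_product, Finset.mem_range] at ha
    dsimp only
    by_cases h : a.1 < a.2
    · rw [if_pos h, if_pos (by omega)]
      have h1 : m - 1 - (m - 1 - a.1) = a.1 := by omega
      have h2 : m - 1 - (m - 1 - a.2) = a.2 := by omega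
      simp only [h1, h2]
      exact hR _ _
    · rw [if_neg h, if_neg (by omega)]

private lemma telescope_s7 (c : ℝ) (t : ℕ) (hc : ∀ k : ℕ, k ≤ t → c + k ≠ 0) :
    ∏ k ∈ Finset.range t, (c + k + 1) / (c + k) = (c + t) / c := by
  induction t with
  | zero =>
    simp only [Finset.range_zero, Finset.prod_empty, Nat.cast_zero, add_zero]
    rw [div_self (by simpa using hc 0 le_rfl)]
  | succ t ih =>
    rw [Finset.prod_range_succ, ih (fun k hk => hc k (by omega))]
    have h1 : c + t ≠ 0 := hc t (by omega)
    have h2 : c ≠ 0 := by simpa using hc 0 (by omega)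
    field_simp
    push_cast; ring

private lemma prod_desc (a r : ℕ) (h : r ≤ a + 1) :
    ∏ k ∈ Finset.range r, ((a : ℝ) - k) = (a.descFactorial r : ℝ) := by
  induction r with
  | zero => simp
  | succ r ih =>
    rw [Finset.prod_range_succ, ih (by omega), Nat.descFactorial_succ]
    have hra : ((a - r : ℕ) : ℝ) = (a : ℝ) - r := by
      have : r ≤ a := by omega
      push_cast [this]; ring
    push_cast [Nat.descFactorial_succ] at *;
    rw [hra]; ring

private lemma prod_asc (a r : ℕ) :
    ∏ k ∈ Finset.range r, ((a : ℝ) + k) = (a.ascFactorial r : ℝ) := by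
  induction r with
  | zero => simp
  | succ r ih =>
    rw [Finset.prod_range_succ, ih, Nat.ascFactorial_succ]
    push_cast
    ring

private noncomputable def Ur : ℕ → ℕ → ℝ := fun i j =>
  (((i : ℝ) + 1/2) ^ 2 - ((j : ℝ) + 1/2) ^ 2) / ((i : ℝ) ^ 2 - (j : ℝ) ^ 2)

private lemma QU (t : ℕ) : QQ Ur t = 2 ^ (t - 1) := by
  induction t with
  | zero => simp [QQ]
  | succ t ih =>
    rw [QQ_succ, ih]
    rcases Nat.eq_zero_or_pos t with ht | ht
    · subst ht; simp
    · have hrow : ∀ k ∈ Finset.range t, Ur k t = ((t : ℝ) + k + 1) / ((t : ℝ) + k) := by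
        intro k hk
        have hk' := Finset.mem_range.mp hk
        have hkt : (k : ℝ) - t ≠ 0 := by
          have : (k : ℝ) < t := by exact_mod_cast hk'
          intro h; nlinarith
        unfold Ur
        have h1 : ((k : ℝ) + 1/2) ^ 2 - ((t : ℝ) + 1/2) ^ 2
            = ((k : ℝ) - t) * ((t : ℝ) + k + 1) := by ring
        have h2 : (k : ℝ) ^ 2 - (t : ℝ) ^ 2 = ((k : ℝ) - t) * ((t : ℝ) + k) := by ring
        rw [h1, h2, mul_div_mul_left _ _ hkt]
      rw [Finset.prod_congr rfl hrow]
      have hc : ∀ k : ℕ, k ≤ t → (t : ℝ) + k ≠ 0 := by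
        intro k hk
        have : (0 : ℝ) < t := by exact_mod_cast ht
        positivity
      rw [telescope_s7 _ _ hc]
      have htR : (t : ℝ) ≠ 0 := by positivity
      have h2t : ((t : ℝ) + t) / t = 2 := by field_simp; ring
      rw [h2t]
      have h3 : t - 1 + 1 = t := by omega
      rw [← pow_succ, h3, Nat.add_sub_cancel]

private noncomputable def Xo (l p : ℕ) : ℕ → ℝ := fun k =>
  if k = 0 then ((l : ℝ) + (p : ℝ) + 7/2) ^ 2
  else if k = 1 then ((p : ℝ) + 5/2) ^ 2
  else ((p : ℝ) + 5/2 - (k : ℝ)) ^ 2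

private noncomputable def R0 (l p : ℕ) : ℕ → ℕ → ℝ := fun i j =>
  (Xo l p i - Xo l p j) / (((p : ℝ) + 2 - (i : ℝ)) ^ 2 - ((p : ℝ) + 2 - (j : ℝ)) ^ 2)

private noncomputable def Xr (l p : ℕ) : ℕ → ℝ := fun k =>
  if k = p + 2 then ((l : ℝ) + (p : ℝ) + 7/2) ^ 2
  else if k = p + 1 then ((p : ℝ) + 5/2) ^ 2
  else ((k : ℝ) + 1/2) ^ 2

private noncomputable def Sr (l p : ℕ) : ℕ → ℕ → ℝ := fun i j =>
  (Xr l p i - Xr l p j) / ((i : ℝ) ^ 2 - (j : ℝ) ^ 2)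

private lemma R0_to_Sr (l p : ℕ) : QQ (R0 l p) (p + 3) = QQ (Sr l p) (p + 3) := by
  have hsym : ∀ i j, R0 l p i j = R0 l p j i := by
    intro i j
    unfold R0
    rw [← neg_sub (Xo l p j), ← neg_sub (((p : ℝ) + 2 - (j : ℝ)) ^ 2), neg_div_neg_eq]
  rw [QQ_reverse (R0 l p) hsym (p + 3)]
  unfold QQ
  apply Finset.prod_congr rfl
  intro i hi
  apply Finset.prod_congr rfl
  intro j hj
  have hi' := Finset.mem_range.mp hi
  have hj' := Finset.mem_range.mp hj
  by_cases h : i < j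
  · rw [if_pos h, if_pos h]
    have key : ∀ a : ℕ, a < p + 3 → (Xo l p (p + 3 - 1 - a) = Xr l p a ∧
        ((p : ℝ) + 2 - ((p + 3 - 1 - a : ℕ) : ℝ)) = (a : ℝ)) := by
      intro a ha
      constructor
      · unfold Xo Xr
        rcases Nat.eq_or_lt_of_le (show a ≤ p + 2 by omega) with h1 | h1
        · rw [if_pos (by omega), if_pos (by omega)]
        · rcases Nat.eq_or_lt_of_le (show a ≤ p + 1 by omega) with h2 | h2
          · rw [if_neg (by omega), if_pos (by omega), if_neg (by omega), if_pos (by omega)]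
          · rw [if_neg (by omega), if_neg (by omega), if_neg (by omega), if_neg (by omega)]
            have hcast : ((p + 3 - 1 - a : ℕ) : ℝ) = (p : ℝ) + 2 - (a : ℝ) := by
              have : a ≤ p + 2 := by omega
              push_cast [Nat.cast_sub, this]
              ring
            rw [hcast]
            ring
      · have : a ≤ p + 2 := by omega
        push_cast [Nat.cast_sub, this]
        ring
    show R0 l p (p + 3 - 1 - i) (p + 3 - 1 - j) = Sr l p i j
    unfold R0 Sr
    rw [(key i hi').1, (key j hj').1, (key i hi').2, (key j hj').2]
  · rw [if_neg h, if_neg h]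

private lemma rowB_eval (l p : ℕ) :
    ∏ k ∈ Finset.range (p + 1), Sr l p k (p + 1)
      = (((p+2).descFactorial (p+1) : ℝ) * ((p+3).ascFactorial (p+1) : ℝ))
        / (((p+1).descFactorial (p+1) : ℝ) * ((p+1).ascFactorial (p+1) : ℝ)) := by
  have h1 : ∀ k ∈ Finset.range (p + 1), Sr l p k (p + 1)
      = (((p:ℝ)+2-(k:ℝ)) * ((p:ℝ)+3+(k:ℝ))) / ((((p:ℝ)+1-(k:ℝ))) * (((p:ℝ)+1+(k:ℝ)))) := by
    intro k hk
    have hk' := Finset.mem_range.mp hk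
    unfold Sr Xr
    rw [if_neg (by omega), if_neg (by omega), if_neg (by omega), if_pos rfl]
    have e1 : ((k:ℝ) + 1/2) ^ 2 - ((p:ℝ) + 5/2) ^ 2
        = -((((p:ℝ)+2-(k:ℝ)) * ((p:ℝ)+3+(k:ℝ)))) := by ring
    have e2 : ((k:ℝ)) ^ 2 - ((p+1 : ℕ):ℝ) ^ 2
        = -((((p:ℝ)+1-(k:ℝ)) * ((p:ℝ)+1+(k:ℝ)))) := by push_cast; ring
    rw [e1, e2, neg_div_neg_eq]
  rw [Finset.prod_congr rfl h1, Finset.prod_div_distrib, Finset.prod_mul_distrib,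
    Finset.prod_mul_distrib]
  have d1 : ∏ k ∈ Finset.range (p+1), ((p:ℝ)+2-(k:ℝ)) = ((p+2).descFactorial (p+1) : ℝ) := by
    rw [← prod_desc (p+2) (p+1) (by omega)]
    exact Finset.prod_congr rfl fun k _ => by push_cast; ring
  have a1 : ∏ k ∈ Finset.range (p+1), ((p:ℝ)+3+(k:ℝ)) = ((p+3).ascFactorial (p+1) : ℝ) := by
    rw [← prod_asc (p+3) (p+1)]
    exact Finset.prod_congr rfl fun k _ => by push_cast; ring
  have d2 : ∏ k ∈ Finset.range (p+1), ((p:ℝ)+1-(k:ℝ)) = ((p+1).descFactorial (p+1) : ℝ) := by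
    rw [← prod_desc (p+1) (p+1) (by omega)]
    exact Finset.prod_congr rfl fun k _ => by push_cast; ring
  have a2 : ∏ k ∈ Finset.range (p+1), ((p:ℝ)+1+(k:ℝ)) = ((p+1).ascFactorial (p+1) : ℝ) := by
    rw [← prod_asc (p+1) (p+1)]
    exact Finset.prod_congr rfl fun k _ => by push_cast; ring
  rw [d1, a1, d2, a2]

private lemma rowA1_eval (l p : ℕ) :
    ∏ k ∈ Finset.range (p + 1), Sr l p k (p + 2)
      = (((l+p+3).descFactorial (p+1) : ℝ) * ((l+p+4).ascFactorial (p+1) : ℝ))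
        / (((p+2).descFactorial (p+1) : ℝ) * ((p+2).ascFactorial (p+1) : ℝ)) := by
  have h1 : ∀ k ∈ Finset.range (p + 1), Sr l p k (p + 2)
      = (((l:ℝ)+(p:ℝ)+3-(k:ℝ)) * ((l:ℝ)+(p:ℝ)+4+(k:ℝ)))
        / ((((p:ℝ)+2-(k:ℝ))) * (((p:ℝ)+2+(k:ℝ)))) := by
    intro k hk
    have hk' := Finset.mem_range.mp hk
    unfold Sr Xr
    rw [if_neg (by omega), if_neg (by omega), if_pos rfl]
    have e1 : ((k:ℝ) + 1/2) ^ 2 - ((l:ℝ) + (p:ℝ) + 7/2) ^ 2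
        = -((((l:ℝ)+(p:ℝ)+3-(k:ℝ)) * ((l:ℝ)+(p:ℝ)+4+(k:ℝ)))) := by ring
    have e2 : ((k:ℝ)) ^ 2 - ((p+2 : ℕ):ℝ) ^ 2
        = -((((p:ℝ)+2-(k:ℝ)) * ((p:ℝ)+2+(k:ℝ)))) := by push_cast; ring
    rw [e1, e2, neg_div_neg_eq]
  rw [Finset.prod_congr rfl h1, Finset.prod_div_distrib, Finset.prod_mul_distrib,
    Finset.prod_mul_distrib]
  have d1 : ∏ k ∈ Finset.range (p+1), ((l:ℝ)+(p:ℝ)+3-(k:ℝ))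
      = ((l+p+3).descFactorial (p+1) : ℝ) := by
    rw [← prod_desc (l+p+3) (p+1) (by omega)]
    exact Finset.prod_congr rfl fun k _ => by push_cast; ring
  have a1 : ∏ k ∈ Finset.range (p+1), ((l:ℝ)+(p:ℝ)+4+(k:ℝ))
      = ((l+p+4).ascFactorial (p+1) : ℝ) := by
    rw [← prod_asc (l+p+4) (p+1)]
    exact Finset.prod_congr rfl fun k _ => by push_cast; ring
  have d2 : ∏ k ∈ Finset.range (p+1), ((p:ℝ)+2-(k:ℝ)) = ((p+2).descFactorial (p+1) : ℝ) := by
    rw [← prod_desc (p+2) (p+1) (by omega)]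
    exact Finset.prod_congr rfl fun k _ => by push_cast; ring
  have a2 : ∏ k ∈ Finset.range (p+1), ((p:ℝ)+2+(k:ℝ)) = ((p+2).ascFactorial (p+1) : ℝ) := by
    rw [← prod_asc (p+2) (p+1)]
    exact Finset.prod_congr rfl fun k _ => by push_cast; ring
  rw [d1, a1, d2, a2]

private lemma rowA2_eval (l p : ℕ) :
    Sr l p (p+1) (p+2) = (((l:ℝ)+1) * ((l:ℝ)+2*(p:ℝ)+6)) / (2*(p:ℝ)+3) := by
  unfold Sr Xr
  rw [if_neg (by omega), if_pos rfl, if_pos rfl]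
  have e1 : ((p:ℝ) + 5/2) ^ 2 - ((l:ℝ) + (p:ℝ) + 7/2) ^ 2
      = -(((l:ℝ)+1) * ((l:ℝ)+2*(p:ℝ)+6)) := by ring
  have e2 : ((p+1 : ℕ):ℝ) ^ 2 - ((p+2 : ℕ):ℝ) ^ 2 = -(2*(p:ℝ)+3) := by push_cast; ring
  rw [e1, e2, neg_div_neg_eq]

set_option maxHeartbeats 1000000 in
private lemma final_identity (l p : ℕ) :
    2^p * ((((p+2).descFactorial (p+1) : ℝ) * ((p+3).ascFactorial (p+1) : ℝ))
        / (((p+1).descFactorial (p+1) : ℝ) * ((p+1).ascFactorial (p+1) : ℝ)))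
      * (((((l+p+3).descFactorial (p+1) : ℝ) * ((l+p+4).ascFactorial (p+1) : ℝ))
        / (((p+2).descFactorial (p+1) : ℝ) * ((p+2).ascFactorial (p+1) : ℝ)))
        * ((((l:ℝ)+1) * ((l:ℝ)+2*(p:ℝ)+6)) / (2*(p:ℝ)+3)))
      = 2 ^ (p + 2) * (2 * ((p:ℝ)+3) - 1 - 2)
        * (((l : ℝ) + (2 * ((p:ℝ)+3) - 1) + 1) * ((l : ℝ) + 1)
          / (((l : ℝ) + (2 * ((p:ℝ)+3) - 1)) * ((l : ℝ) + 2)))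
        * (Nat.choose (l + 2*p + 5) (l + 1) : ℝ) := by
  have hfact : ∀ a : ℕ, ((a ! : ℕ) : ℝ) ≠ 0 :=
    fun a => Nat.cast_ne_zero.mpr (Nat.factorial_ne_zero a)
  have v1 : ((p+2).descFactorial (p+1) : ℝ) = ((p+2)! : ℝ) := by
    have h := Nat.factorial_mul_descFactorial (show p+1 ≤ p+2 by omega)
    have h12 : p+2-(p+1) = 1 := by omega
    rw [h12, Nat.factorial_one, one_mul] at h
    exact_mod_cast congrArg (Nat.cast (R := ℝ)) h
  have v2 : ((p+1).descFactorial (p+1) : ℝ) = ((p+1)! : ℝ) := by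
    exact_mod_cast congrArg (Nat.cast (R := ℝ)) (Nat.descFactorial_self (p+1))
  have v3 : ((l+p+3).descFactorial (p+1) : ℝ) = ((l+p+3)! : ℝ) / ((l+2)! : ℝ) := by
    have h := Nat.factorial_mul_descFactorial (show p+1 ≤ l+p+3 by omega)
    have h12 : l+p+3-(p+1) = l+2 := by omega
    rw [h12] at h
    rw [eq_div_iff (hfact (l+2))]
    exact_mod_cast congrArg (Nat.cast (R := ℝ)) (by rw [mul_comm] at h; exact h)
  have v4 : ((p+3).ascFactorial (p+1) : ℝ) = ((2*p+3)! : ℝ) / ((p+2)! : ℝ) := by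
    have h := Nat.factorial_mul_ascFactorial (p+2) (p+1)
    have h12 : p+2+(p+1) = 2*p+3 := by omega
    rw [h12] at h
    rw [eq_div_iff (hfact (p+2))]
    exact_mod_cast congrArg (Nat.cast (R := ℝ)) (by rw [mul_comm] at h; exact h)
  have v5 : ((p+1).ascFactorial (p+1) : ℝ) = ((2*p+1)! : ℝ) / ((p)! : ℝ) := by
    have h := Nat.factorial_mul_ascFactorial p (p+1)
    have h12 : p+(p+1) = 2*p+1 := by omega
    rw [h12] at h
    rw [eq_div_iff (hfact p)]
    exact_mod_cast congrArg (Nat.cast (R := ℝ)) (by rw [mul_comm] at h; exact h)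
  have v6 : ((p+2).ascFactorial (p+1) : ℝ) = ((2*p+2)! : ℝ) / ((p+1)! : ℝ) := by
    have h := Nat.factorial_mul_ascFactorial (p+1) (p+1)
    have h12 : p+1+(p+1) = 2*p+2 := by omega
    rw [h12] at h
    rw [eq_div_iff (hfact (p+1))]
    exact_mod_cast congrArg (Nat.cast (R := ℝ)) (by rw [mul_comm] at h; exact h)
  have v7 : ((l+p+4).ascFactorial (p+1) : ℝ) = ((l+2*p+4)! : ℝ) / ((l+p+3)! : ℝ) := by
    have h := Nat.factorial_mul_ascFactorial (l+p+3) (p+1)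
    have h12 : l+p+3+(p+1) = l+2*p+4 := by omega
    rw [h12] at h
    rw [eq_div_iff (hfact (l+p+3))]
    exact_mod_cast congrArg (Nat.cast (R := ℝ)) (by rw [mul_comm] at h; exact h)
  have v8 : ((Nat.choose (l + 2*p + 5) (l + 1)) : ℝ)
      = ((l+2*p+5)! : ℝ) / (((l+1)! : ℝ) * ((2*p+4)! : ℝ)) := by
    have h := Nat.cast_choose ℝ (show l+1 ≤ l+2*p+5 by omega)
    have h12 : l+2*p+5-(l+1) = 2*p+4 := by omega
    rw [h12] at h
    exact_mod_cast h
  rw [v1, v2, v3, v4, v5, v6, v7, v8]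
  have f1 : ((2*p+4)! : ℝ) = (2*(p:ℝ)+4) * ((2*p+3)! : ℝ) := by
    rw [show 2*p+4 = (2*p+3)+1 from rfl, Nat.factorial_succ]
    push_cast; ring
  have f2 : ((l+2*p+5)! : ℝ) = ((l:ℝ)+2*(p:ℝ)+5) * ((l+2*p+4)! : ℝ) := by
    rw [show l+2*p+5 = (l+2*p+4)+1 from rfl, Nat.factorial_succ]
    push_cast; ring
  have f3 : ((l+2)! : ℝ) = ((l:ℝ)+2) * ((l+1)! : ℝ) := by
    rw [show l+2 = (l+1)+1 from rfl, Nat.factorial_succ]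
    push_cast; ring
  have f4 : ((2*p+2)! : ℝ) = (2*(p:ℝ)+2) * ((2*p+1)! : ℝ) := by
    rw [show 2*p+2 = (2*p+1)+1 from rfl, Nat.factorial_succ]
    push_cast; ring
  have f5 : ((2*p+3)! : ℝ) = (2*(p:ℝ)+3) * ((2*p+2)! : ℝ) := by
    rw [show 2*p+3 = (2*p+2)+1 from rfl, Nat.factorial_succ]
    push_cast; ring
  have f6 : ((p+2)! : ℝ) = ((p:ℝ)+2) * ((p+1)! : ℝ) := by
    rw [show p+2 = (p+1)+1 from rfl, Nat.factorial_succ]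
    push_cast; ring
  have f7 : ((p+1)! : ℝ) = ((p:ℝ)+1) * ((p)! : ℝ) := by
    rw [Nat.factorial_succ]
    push_cast; ring
  rw [f2, f1, f5, f4, f6, f7, f3]
  have h2 : (2:ℝ) ^ (p+2) = 2^p * 4 := by rw [pow_add]; norm_num
  rw [h2]
  have n1 : ((p)! : ℝ) ≠ 0 := hfact p
  have n2 : ((2*p+1)! : ℝ) ≠ 0 := hfact _
  have n3 : ((l+1)! : ℝ) ≠ 0 := hfact _
  have n4 : ((l+p+3)! : ℝ) ≠ 0 := hfact _
  have n5 : ((l+2*p+4)! : ℝ) ≠ 0 := hfact _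
  have b1 : (2*(p:ℝ)+3) ≠ 0 := by positivity
  have b2 : ((l:ℝ)+2*(p:ℝ)+5) ≠ 0 := by positivity
  have b3 : ((l:ℝ)+2) ≠ 0 := by positivity
  have b4 : ((p:ℝ)+1) ≠ 0 := by positivity
  have b5 : ((p:ℝ)+2) ≠ 0 := by positivity
  have b6 : ((l:ℝ)+1) ≠ 0 := by positivity
  have b7 : (2*(p:ℝ)+2) ≠ 0 := by positivity
  have b8 : (2*(p:ℝ)+4) ≠ 0 := by positivity
  set A : ℝ := ((p)! : ℝ) with hA
  set B : ℝ := ((2*p+1)! : ℝ) with hB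
  set C : ℝ := ((l+1)! : ℝ) with hC
  set D : ℝ := ((l+p+3)! : ℝ) with hD
  set E : ℝ := ((l+2*p+4)! : ℝ) with hE
  have hn : (2:ℝ) * ((p:ℝ)+3) - 1 = 2*(p:ℝ)+5 := by ring
  rw [hn]
  field_simp
  ring

/-- Weyl dimension formula for `so(2m)` (type `D_m`) with highest weight
`λ = (l+3/2, 3/2, (1/2)_{m-3}, ±1/2)` and `δ = (m-1, m-2, …, 0)`: the product over the
positive roots equals `2^{m-1} · (n-2) · ((l+n+1)(l+1)/((l+n)(l+2))) · C(l+n, l+1)`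
with `n = 2m-1`. -/
theorem sphere_multiplicity_kerPstar_odd (m l : ℕ) (hm : 3 ≤ m) (σ : ℝ) (hσ : σ = 1 ∨ σ = -1) :
    let n : ℝ := 2 * m - 1
    let δ : Fin m → ℝ := fun i => (m : ℝ) - 1 - (i : ℕ)
    let lam : Fin m → ℝ := fun i =>
      if (i : ℕ) = 0 then (l : ℝ) + 3 / 2
      else if (i : ℕ) = 1 then 3 / 2
      else if (i : ℕ) = m - 1 then σ / 2
      else 1 / 2
    let f : Fin m → ℝ := fun i => lam i + δ i
    (∏ i, ∏ j, if i < j then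
        ((f i - f j) * (f i + f j)) / ((δ i - δ j) * (δ i + δ j)) else 1)
      = 2 ^ (m - 1) * (n - 2) * (((l : ℝ) + n + 1) * ((l : ℝ) + 1) / ((((l : ℝ) + n)) * ((l : ℝ) + 2)))
        * (Nat.choose (l + (2 * m - 1)) (l + 1) : ℝ) := by
  intro n δ lam f
  obtain ⟨p, rfl⟩ : ∃ p, m = p + 3 := ⟨m - 3, by omega⟩
  have hXo : ∀ k : Fin (p + 3), f k * f k = Xo l p (k : ℕ) := by
    intro k
    have hk : (k : ℕ) < p + 3 := k.isLt
    simp only [f, lam, δ, Xo]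
    rcases Nat.lt_or_ge (k : ℕ) 2 with h2 | h2
    · interval_cases h : (k : ℕ) <;> push_cast [h] <;> ring
    · rcases Nat.eq_or_lt_of_le (show (k : ℕ) ≤ p + 2 by omega) with h3 | h3
      · rw [if_neg (by omega), if_neg (by omega), if_pos (by omega),
          if_neg (by omega), if_neg (by omega)]
        rcases hσ with h | h <;> subst h <;> push_cast [h3] <;> ring
      · rw [if_neg (by omega), if_neg (by omega), if_neg (by omega),
          if_neg (by omega), if_neg (by omega)]
        push_cast
        ring
  have hstep1 : (∏ i, ∏ j, if i < j then
        ((f i - f j) * (f i + f j)) / ((δ i - δ j) * (δ i + δ j)) else 1)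
      = QQ (R0 l p) (p + 3) := by
    unfold QQ
    rw [← Fin.prod_univ_eq_prod_range
      (fun a => ∏ j ∈ Finset.range (p + 3), if a < j then R0 l p a j else 1) (p + 3)]
    apply Finset.prod_congr rfl
    intro i _
    rw [← Fin.prod_univ_eq_prod_range (fun b => if (i : ℕ) < b then R0 l p (i : ℕ) b else 1) (p + 3)]
    apply Finset.prod_congr rfl
    intro j _
    by_cases h : i < j
    · rw [if_pos h, if_pos (show (i : ℕ) < (j : ℕ) from h)]
      have hnum : (f i - f j) * (f i + f j) = f i * f i - f j * f j := by ring
      have hden : (δ i - δ j) * (δ i + δ j)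
          = ((p : ℝ) + 2 - (i : ℕ)) ^ 2 - ((p : ℝ) + 2 - (j : ℕ)) ^ 2 := by
        simp only [δ]
        push_cast
        ring
      rw [hnum, hXo i, hXo j, hden]
      rfl
    · rw [if_neg h, if_neg (show ¬ ((i : ℕ) < (j : ℕ)) from h)]
  have hU : QQ (Sr l p) (p + 1) = 2 ^ p := by
    have hcong : QQ (Sr l p) (p + 1) = QQ Ur (p + 1) := by
      unfold QQ
      apply Finset.prod_congr rfl
      intro i hi
      apply Finset.prod_congr rfl
      intro j hj
      have hi' := Finset.mem_range.mp hi
      have hj' := Finset.mem_range.mp hj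
      by_cases h : i < j
      · rw [if_pos h, if_pos h]
        unfold Sr Xr Ur
        rw [if_neg (by omega), if_neg (by omega), if_neg (by omega), if_neg (by omega)]
      · rw [if_neg h, if_neg h]
    rw [hcong, QU (p + 1), Nat.add_sub_cancel]
  have hsucc2 : QQ (Sr l p) (p + 3)
      = QQ (Sr l p) (p + 2) * ∏ k ∈ Finset.range (p + 2), Sr l p k (p + 2) :=
    QQ_succ (Sr l p) (p + 2)
  have hsucc1 : QQ (Sr l p) (p + 2)
      = QQ (Sr l p) (p + 1) * ∏ k ∈ Finset.range (p + 1), Sr l p k (p + 1) :=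
    QQ_succ (Sr l p) (p + 1)
  have hsplitA : ∏ k ∈ Finset.range (p + 2), Sr l p k (p + 2)
      = (∏ k ∈ Finset.range (p + 1), Sr l p k (p + 2)) * Sr l p (p + 1) (p + 2) :=
    Finset.prod_range_succ _ (p + 1)
  rw [hstep1, R0_to_Sr, hsucc2, hsucc1, hU, hsplitA, rowB_eval, rowA1_eval, rowA2_eval]
  simp only [n]
  rw [show p + 3 - 1 = p + 2 from rfl]
  rw [show l + (2 * (p + 3) - 1) = l + 2*p + 5 from by omega]
  rw [show ((p + 3 : ℕ) : ℝ) = (p : ℝ) + 3 from by push_cast; ring]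
  exact final_identity l p
end

section
/- Let n ≥ 3 be odd, let k, ε, l be integers with 1 ≤ k ≤ n−1, ε ∈ {0,1} and l ≥ max{ε, −(n−1)/2 + k}. In ℝ^n define the bilinear form B(x,y) = Σ_i x_i y_i − (Σ_i x_i)(Σ_i y_i)/(n+1), set ρ = (2n, 2(n−1), …, 2) (i.e. ρ_i = 2(n+1−i)), and let λ = λ(k,ε,l) be the vector with first entry (n+1)/2 − k + 2l − ε, followed by n−k−1 entries equal to (n+1)/2 − k + l, then one entry equal to (n−1)/2 − k + l + ε, then k−1 entries equal to (n−1)/2 − k + l. Then B(λ+ρ, λ) + n(n+1)/4 = (l+n−k)(2l+n+1−2ε). -/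
open Finset

private lemma sum_range_id_real (n : ℕ) : ∑ i ∈ Finset.range n, (i : ℝ) = n * (n - 1) / 2 := by
  induction n with
  | zero => simp
  | succ m ih =>
    rw [Finset.sum_range_succ, ih]
    push_cast
    ring

private lemma sum_Ico_linear (s t : ℕ) (h : s ≤ t) (p q : ℝ) :
    ∑ i ∈ Finset.Ico s t, (p + q * (i : ℝ))
      = ((t : ℝ) - s) * p + q * (((t : ℝ) * (t - 1) - s * (s - 1)) / 2) := by
  rw [Finset.sum_add_distrib, Finset.sum_const, Nat.card_Ico, ← Finset.mul_sum,
    Finset.sum_Ico_eq_sub _ h, sum_range_id_real, sum_range_id_real,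
    nsmul_eq_mul, Nat.cast_sub h]
  ring

private lemma sum_split (n k : ℕ) (hk1 : 1 ≤ k) (hkn : k + 1 ≤ n) (f : ℕ → ℝ) :
    ∑ i ∈ Finset.range n, f i =
      f 0 + (∑ i ∈ Finset.Ico 1 (n - k), f i) + f (n - k)
        + ∑ i ∈ Finset.Ico (n - k + 1) n, f i := by
  rw [Finset.range_eq_Ico,
    ← Finset.sum_Ico_consecutive f (by omega : 0 ≤ n - k) (by omega : n - k ≤ n),
    Finset.sum_eq_sum_Ico_succ_bot (by omega : 0 < n - k) f,
    Finset.sum_eq_sum_Ico_succ_bot (by omega : n - k < n) f]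
  ring

/-- On `ℂP^n = SU(n+1)/S(U(n)×U(1))` with `n` odd, Freudenthal's formula for the highest
weight `λ(k,ε,l)` of an irreducible summand of `L²(S_{1/2}(k))`, `1 ≤ k ≤ n-1`:
`B(λ+ρ, λ) + n(n+1)/4 = (l+n-k)(2l+n+1-2ε)`, where `B` is the Killing-form inner product
with `⟨e_i,e_j⟩ = δ_ij - 1/(n+1)` and `ρ = 2δ_{SU(n+1)} = (2n, 2(n-1), …, 2)`. -/
theorem cpn_dirac_eigenvalue (n k ε l : ℕ) (hn : Odd n) (hn3 : 3 ≤ n)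
    (hk1 : 1 ≤ k) (hk2 : k ≤ n - 1) (hε : ε = 0 ∨ ε = 1)
    (hl1 : ε ≤ l) (hl2 : (k : ℤ) - ((n : ℤ) - 1) / 2 ≤ (l : ℤ)) :
    let ρ : Fin n → ℝ := fun i => 2 * ((n : ℝ) + 1 - ((i : ℕ) + 1))
    let lam : Fin n → ℝ := fun i =>
      if (i : ℕ) = 0 then ((n : ℝ) + 1) / 2 - k + 2 * l - ε
      else if (i : ℕ) + k < n then ((n : ℝ) + 1) / 2 - k + l
      else if (i : ℕ) + k = n then ((n : ℝ) - 1) / 2 - k + l + ε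
      else ((n : ℝ) - 1) / 2 - k + l
    let B : (Fin n → ℝ) → (Fin n → ℝ) → ℝ := fun x y =>
      (∑ i, x i * y i) - (∑ i, x i) * (∑ i, y i) / ((n : ℝ) + 1)
    B (fun i => lam i + ρ i) lam + (n : ℝ) * ((n : ℝ) + 1) / 4
      = ((l : ℝ) + n - k) * (2 * l + (n : ℝ) + 1 - 2 * ε) := by
  intro ρ lam B
  have hkn : k + 1 ≤ n := by omega
  set N : ℝ := (n : ℝ) with hN
  set K : ℝ := (k : ℝ) with hK
  set L : ℝ := (l : ℝ) with hL
  set e : ℝ := (ε : ℝ) with he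
  set lamN : ℕ → ℝ := fun i =>
      if i = 0 then (N + 1) / 2 - K + 2 * L - e
      else if i + k < n then (N + 1) / 2 - K + L
      else if i + k = n then (N - 1) / 2 - K + L + e
      else (N - 1) / 2 - K + L with hlamN
  set ρN : ℕ → ℝ := fun i => 2 * (N + 1 - ((i : ℝ) + 1)) with hρN
  have h1 : ∑ i : Fin n, (lam i + ρ i) * lam i
      = ∑ i ∈ Finset.range n, (lamN i + ρN i) * lamN i :=
    Fin.sum_univ_eq_sum_range (fun i => (lamN i + ρN i) * lamN i) n
  have h2 : ∑ i : Fin n, (lam i + ρ i)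
      = ∑ i ∈ Finset.range n, (lamN i + ρN i) :=
    Fin.sum_univ_eq_sum_range (fun i => lamN i + ρN i) n
  have h3 : ∑ i : Fin n, lam i = ∑ i ∈ Finset.range n, lamN i :=
    Fin.sum_univ_eq_sum_range lamN n
  -- cast facts
  have hcm : ((n - k : ℕ) : ℝ) = N - K := by rw [Nat.cast_sub (by omega)]
  -- branch evaluations
  have hv0 : lamN 0 = (N + 1) / 2 - K + 2 * L - e := by simp [hlamN]
  have hvm : lamN (n - k) = (N - 1) / 2 - K + L + e := by
    simp only [hlamN]
    rw [if_neg (by omega), if_neg (by omega), if_pos (by omega)]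
  have hmid : ∀ i ∈ Finset.Ico 1 (n - k), lamN i = (N + 1) / 2 - K + L := by
    intro i hi
    simp only [Finset.mem_Ico] at hi
    simp only [hlamN]
    rw [if_neg (by omega), if_pos (by omega)]
  have hend : ∀ i ∈ Finset.Ico (n - k + 1) n, lamN i = (N - 1) / 2 - K + L := by
    intro i hi
    simp only [Finset.mem_Ico] at hi
    simp only [hlamN]
    rw [if_neg (by omega), if_neg (by omega), if_neg (by omega)]
  set a : ℝ := (N + 1) / 2 - K + L with ha
  set b : ℝ := (N - 1) / 2 - K + L with hb
  -- ρN at key points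
  have hρ0 : ρN 0 = 2 * N := by simp only [hρN]; push_cast; ring
  have hρm : ρN (n - k) = 2 * K := by simp only [hρN]; rw [hcm]; ring
  -- sum of lamN
  have hS3 : ∑ i ∈ Finset.range n, lamN i
      = (lamN 0) + ((N - K : ℝ) - 1) * a + lamN (n - k) + (K - 1) * b := by
    rw [sum_split n k hk1 hkn]
    rw [Finset.sum_congr rfl hmid, Finset.sum_congr rfl hend,
      Finset.sum_const, Finset.sum_const, Nat.card_Ico, Nat.card_Ico]
    have c1 : ((n - k - 1 : ℕ) : ℝ) = N - K - 1 := by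
      rw [show n - k - 1 = n - (k + 1) by omega, Nat.cast_sub (by omega)]; push_cast; ring
    have c2 : ((n - (n - k + 1) : ℕ) : ℝ) = K - 1 := by
      rw [show n - (n - k + 1) = k - 1 by omega, Nat.cast_sub (by omega)]; push_cast; ring
    rw [nsmul_eq_mul, nsmul_eq_mul, c1, c2]
  -- sum of lamN + ρN
  have hS2 : ∑ i ∈ Finset.range n, (lamN i + ρN i)
      = (∑ i ∈ Finset.range n, lamN i) + N * (N + 1) := by
    rw [Finset.sum_add_distrib]
    congr 1
    have : ∀ i ∈ Finset.Ico 0 n, ρN i = 2 * N + (-2) * (i : ℝ) := by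
      intro i _; simp only [hρN]; ring
    rw [Finset.range_eq_Ico, Finset.sum_congr rfl this,
      sum_Ico_linear 0 n (by omega)]
    push_cast
    ring
  -- main quadratic sum
  have hm1 : ∀ i ∈ Finset.Ico 1 (n - k),
      (lamN i + ρN i) * lamN i = (a * a + 2 * N * a) + (-2 * a) * (i : ℝ) := by
    intro i hi
    rw [hmid i hi]; simp only [hρN, ha]; ring
  have hm2 : ∀ i ∈ Finset.Ico (n - k + 1) n,
      (lamN i + ρN i) * lamN i = (b * b + 2 * N * b) + (-2 * b) * (i : ℝ) := by
    intro i hi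
    rw [hend i hi]; simp only [hρN, hb]; ring
  have hS1 : ∑ i ∈ Finset.range n, (lamN i + ρN i) * lamN i
      = (lamN 0 + 2 * N) * lamN 0
        + (((N - K) - 1) * (a * a + 2 * N * a)
            + (-2 * a) * (((N - K) * ((N - K) - 1) - 1 * (1 - 1)) / 2))
        + (lamN (n - k) + 2 * K) * lamN (n - k)
        + ((N - (N - K + 1)) * (b * b + 2 * N * b)
            + (-2 * b) * ((N * (N - 1) - (N - K + 1) * ((N - K + 1) - 1)) / 2)) := by
    rw [sum_split n k hk1 hkn, hρ0, hρm,
      Finset.sum_congr rfl hm1, Finset.sum_congr rfl hm2,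
      sum_Ico_linear 1 (n - k) (by omega), sum_Ico_linear (n - k + 1) n (by omega)]
    push_cast [hcm]
    ring
  simp only [B]
  rw [h1, h2, h3, hS1, hS2, hS3, hv0, hvm]
  have hN1 : N + 1 ≠ 0 := by
    have : (0:ℝ) < N + 1 := by rw [hN]; positivity
    exact ne_of_gt this
  rcases hε with h | h
  · subst h
    simp only [he, Nat.cast_zero] at *
    field_simp
    ring
  · subst h
    simp only [he, Nat.cast_one] at *
    field_simp
    ring
end

section
/- Let n ≥ 3 be odd, let k, ε, ε₁, l be integers with 1 ≤ k ≤ n−2, ε ∈ {0,1}, ε₁ ∈ {0,1}, and l ≥ max{ε+ε₁, −(n+1)/2 + k}. In ℝ^n define the bilinear form B(x,y) = Σ_i x_i y_i − (Σ_i x_i)(Σ_i y_i)/(n+1), set ρ = (2n, 2(n−1), …, 2) (i.e. ρ_i = 2(n+1−i)), and let λ = λ⁺(k,ε,ε₁,l) be the vector with first entry (n+5)/2 − k + 2l − ε − ε₁, second entry (n+3)/2 − k + l + ε₁, followed by n−k−2 entries equal to (n+3)/2 − k + l, then one entry equal to (n+1)/2 − k + l + ε, then k−1 entries equal to (n+1)/2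 − k + l. Then B(λ+ρ, λ) + (n−4)(n+1)/4 = ((l+1) + n − k − ε₁)(2(l+1) + n + 1 − 2ε) − (n+1)(1−ε₁). -/
set_option maxHeartbeats 2000000

open Finset

private lemma sum_Ico_cast_mul_two (a b : ℕ) (h : a ≤ b) :
    (∑ i ∈ Finset.Ico a b, (i : ℝ)) * 2 = ((b : ℝ) - a) * ((a : ℝ) + b - 1) := by
  induction b, h using Nat.le_induction with
  | base => simp
  | succ b hb ih =>
      rw [Finset.sum_Ico_succ_top hb]
      push_cast
      push_cast at ih
      linear_combination ih

private lemma sum_split_s11 (n m : ℕ) (g : ℕ → ℝ) (h2 : 2 ≤ m) (hmn : m < n) :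
    ∑ i ∈ Finset.range n, g i
      = g 0 + g 1 + (∑ i ∈ Finset.Ico 2 m, g i) + g m + ∑ i ∈ Finset.Ico (m+1) n, g i := by
  rw [Finset.range_eq_Ico,
      ← Finset.sum_Ico_consecutive g (by omega : (0:ℕ) ≤ m+1) (by omega : m+1 ≤ n),
      ← Finset.sum_Ico_consecutive g (by omega : (0:ℕ) ≤ m) (by omega : m ≤ m+1),
      ← Finset.sum_Ico_consecutive g (by omega : (0:ℕ) ≤ 2) (by omega : 2 ≤ m),
      Finset.sum_Ico_succ_top (le_refl m), Finset.Ico_self, Finset.sum_empty, zero_add]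
  have : ∑ i ∈ Finset.Ico 0 2, g i = g 0 + g 1 := by
    rw [← Finset.range_eq_Ico]
    simp [Finset.sum_range_succ]
  rw [this]

noncomputable def lamN (n k ε ε₁ l : ℕ) : ℕ → ℝ := fun i =>
  if i = 0 then ((n : ℝ) + 5) / 2 - k + 2 * l - ε - ε₁
  else if i = 1 then ((n : ℝ) + 3) / 2 - k + l + ε₁
  else if i + k < n then ((n : ℝ) + 3) / 2 - k + l
  else if i + k = n then ((n : ℝ) + 1) / 2 - k + l + ε
  else ((n : ℝ) + 1) / 2 - k + l

/-- On `ℂP^n` with `n` odd, Freudenthal's formula for the highest weight `λ⁺(k,ε,ε₁,l)`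
of an irreducible summand of `(Ker P*)⁺ ⊂ L²(S_{3/2})`, `1 ≤ k ≤ n-2`:
`B(λ+ρ, λ) + (n-4)(n+1)/4 = ((l+1)+n-k-ε₁)(2(l+1)+n+1-2ε) - (n+1)(1-ε₁)`. -/
theorem cpn_rs_eigenvalue_plus (n k ε ε₁ l : ℕ) (hn : Odd n) (hn3 : 3 ≤ n)
    (hk1 : 1 ≤ k) (hk2 : k ≤ n - 2) (hε : ε = 0 ∨ ε = 1) (hε₁ : ε₁ = 0 ∨ ε₁ = 1)
    (hl1 : ε + ε₁ ≤ l) (hl2 : (k : ℤ) - ((n : ℤ) + 1) / 2 ≤ (l : ℤ)) :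
    let ρ : Fin n → ℝ := fun i => 2 * ((n : ℝ) + 1 - ((i : ℕ) + 1))
    let lam : Fin n → ℝ := fun i =>
      if (i : ℕ) = 0 then ((n : ℝ) + 5) / 2 - k + 2 * l - ε - ε₁
      else if (i : ℕ) = 1 then ((n : ℝ) + 3) / 2 - k + l + ε₁
      else if (i : ℕ) + k < n then ((n : ℝ) + 3) / 2 - k + l
      else if (i : ℕ) + k = n then ((n : ℝ) + 1) / 2 - k + l + ε
      else ((n : ℝ) + 1) / 2 - k + l
    let B : (Fin n → ℝ) → (Fin n → ℝ) → ℝ := fun x y =>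
      (∑ i, x i * y i) - (∑ i, x i) * (∑ i, y i) / ((n : ℝ) + 1)
    B (fun i => lam i + ρ i) lam + ((n : ℝ) - 4) * ((n : ℝ) + 1) / 4
      = (((l : ℝ) + 1) + (n : ℝ) - k - ε₁) * (2 * ((l : ℝ) + 1) + (n : ℝ) + 1 - 2 * ε)
        - ((n : ℝ) + 1) * (1 - (ε₁ : ℝ)) := by
  intro ρ lam B
  set m := n - k with hm
  have hkn : k ≤ n := by omega
  have h2m : 2 ≤ m := by omega
  have hmn : m < n := by omega
  have hmk : m + k = n := by omega
  have hM : (m : ℝ) = (n : ℝ) - k := by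
    rw [hm, Nat.cast_sub hkn]
  -- abbreviations
  set L := lamN n k ε ε₁ l with hL
  have hlam : lam = fun i : Fin n => L (i : ℕ) := rfl
  have hrho : ρ = fun i : Fin n => 2 * ((n : ℝ) + 1 - (((i : ℕ) : ℝ) + 1)) := rfl
  -- values of L
  have hL0 : L 0 = ((n : ℝ) + 5) / 2 - k + 2 * l - ε - ε₁ := by
    rw [hL, lamN]; norm_num
  have hL1 : L 1 = ((n : ℝ) + 3) / 2 - k + l + ε₁ := by
    rw [hL, lamN]; norm_num
  have hLm : L m = ((n : ℝ) + 1) / 2 - k + l + ε := by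
    rw [hL, lamN]
    rw [if_neg (by omega), if_neg (by omega), if_neg (by omega), if_pos (by omega)]
  have hval2 : ∀ i ∈ Finset.Ico 2 m, L i = ((n : ℝ) + 3) / 2 - k + l := by
    intro i hi
    simp only [Finset.mem_Ico] at hi
    rw [hL, lamN]
    rw [if_neg (by omega), if_neg (by omega), if_pos (by omega)]
  have hval3 : ∀ i ∈ Finset.Ico (m+1) n, L i = ((n : ℝ) + 1) / 2 - k + l := by
    intro i hi
    simp only [Finset.mem_Ico] at hi
    rw [hL, lamN]
    rw [if_neg (by omega), if_neg (by omega), if_neg (by omega), if_neg (by omega)]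
  -- cardinalities
  have hcard2 : (((Finset.Ico 2 m).card : ℕ) : ℝ) = (n : ℝ) - k - 2 := by
    rw [Nat.card_Ico, Nat.cast_sub h2m, hM]; norm_num
  have hcard3 : (((Finset.Ico (m+1) n).card : ℕ) : ℝ) = (k : ℝ) - 1 := by
    rw [Nat.card_Ico, Nat.cast_sub (by omega)]
    push_cast [hM]; ring
  -- index sums
  have hSI2 : (∑ i ∈ Finset.Ico 2 m, (i : ℝ)) * 2
      = ((n : ℝ) - k - 2) * ((n : ℝ) - k + 1) := by
    rw [sum_Ico_cast_mul_two 2 m (by omega), hM]; push_cast; ring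
  have hSI3 : (∑ i ∈ Finset.Ico (m+1) n, (i : ℝ)) * 2
      = ((k : ℝ) - 1) * (2 * (n : ℝ) - k) := by
    rw [sum_Ico_cast_mul_two (m+1) n (by omega)]
    push_cast [hM]; ring
  -- rho as a function on ℕ
  set R : ℕ → ℝ := fun i => 2 * ((n : ℝ) + 1 - ((i : ℝ) + 1)) with hR
  have hne : (n : ℝ) + 1 ≠ 0 := by positivity
  have si2 : (∑ i ∈ Finset.Ico 2 m, (i : ℝ)) = ((n:ℝ)-k-2) * ((n:ℝ)-k+1) / 2 := by
    linarith [hSI2]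
  have si3 : (∑ i ∈ Finset.Ico (m+1) n, (i : ℝ)) = ((k:ℝ)-1) * (2*(n:ℝ)-k) / 2 := by
    linarith [hSI3]
  have si0 : (∑ i ∈ Finset.range n, (i : ℝ)) = (n:ℝ) * ((n:ℝ)-1) / 2 := by
    rw [Finset.range_eq_Ico]
    have h := sum_Ico_cast_mul_two 0 n (Nat.zero_le n)
    push_cast at h
    linarith
  -- sum of L
  have S1 : ∑ i ∈ Finset.range n, L i
      = (((n:ℝ)+5)/2 - k + 2*l - ε - ε₁) + (((n:ℝ)+3)/2 - k + l + ε₁)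
        + ((n:ℝ)-k-2) * (((n:ℝ)+3)/2 - k + l) + (((n:ℝ)+1)/2 - k + l + ε)
        + ((k:ℝ)-1) * (((n:ℝ)+1)/2 - k + l) := by
    rw [sum_split_s11 n m L h2m hmn, Finset.sum_congr rfl hval2, Finset.sum_congr rfl hval3,
        Finset.sum_const, Finset.sum_const, hL0, hL1, hLm, nsmul_eq_mul, nsmul_eq_mul,
        hcard2, hcard3]
  -- sum of R
  have Srho : ∑ i ∈ Finset.range n, R i = (n:ℝ) * ((n:ℝ)+1) := by
    have e : ∑ i ∈ Finset.range n, R i = ∑ i ∈ Finset.range n, (2*(n:ℝ) - 2*(i:ℝ)) :=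
      Finset.sum_congr rfl fun i _ => by rw [hR]; ring
    rw [e, Finset.sum_sub_distrib, Finset.sum_const, Finset.card_range, nsmul_eq_mul,
        ← Finset.mul_sum, si0]
    ring
  -- sum of (L+R)*L
  have P2 : ∑ i ∈ Finset.Ico 2 m, (L i + R i) * L i
      = ((n:ℝ)-k-2) * ((((n:ℝ)+3)/2 - k + l)^2 + 2*(n:ℝ)*(((n:ℝ)+3)/2 - k + l))
        - 2*(((n:ℝ)+3)/2 - k + l) * (((n:ℝ)-k-2) * ((n:ℝ)-k+1) / 2) := by
    have e : ∑ i ∈ Finset.Ico 2 m, (L i + R i) * L i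
        = ∑ i ∈ Finset.Ico 2 m,
            (((((n:ℝ)+3)/2 - k + l)^2 + 2*(n:ℝ)*(((n:ℝ)+3)/2 - k + l))
              - (2*(((n:ℝ)+3)/2 - k + l)) * (i:ℝ)) :=
      Finset.sum_congr rfl fun i hi => by rw [hval2 i hi, hR]; ring
    rw [e, Finset.sum_sub_distrib, Finset.sum_const, nsmul_eq_mul, hcard2,
        ← Finset.mul_sum, si2]
  have P3 : ∑ i ∈ Finset.Ico (m+1) n, (L i + R i) * L i
      = ((k:ℝ)-1) * ((((n:ℝ)+1)/2 - k + l)^2 + 2*(n:ℝ)*(((n:ℝ)+1)/2 - k + l))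
        - 2*(((n:ℝ)+1)/2 - k + l) * (((k:ℝ)-1) * (2*(n:ℝ)-k) / 2) := by
    have e : ∑ i ∈ Finset.Ico (m+1) n, (L i + R i) * L i
        = ∑ i ∈ Finset.Ico (m+1) n,
            (((((n:ℝ)+1)/2 - k + l)^2 + 2*(n:ℝ)*(((n:ℝ)+1)/2 - k + l))
              - (2*(((n:ℝ)+1)/2 - k + l)) * (i:ℝ)) :=
      Finset.sum_congr rfl fun i hi => by rw [hval3 i hi, hR]; ring
    rw [e, Finset.sum_sub_distrib, Finset.sum_const, nsmul_eq_mul, hcard3,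
        ← Finset.mul_sum, si3]
  have hRm : R m = 2 * (k:ℝ) := by rw [hR]; simp only []; rw [hM]; ring
  have hR0 : R 0 = 2 * (n:ℝ) := by rw [hR]; norm_num
  have hR1 : R 1 = 2 * ((n:ℝ) - 1) := by rw [hR]; norm_num; ring
  have S2 : ∑ i ∈ Finset.range n, (L i + R i) * L i
      = (L 0 + R 0) * L 0 + (L 1 + R 1) * L 1
        + (((n:ℝ)-k-2) * ((((n:ℝ)+3)/2 - k + l)^2 + 2*(n:ℝ)*(((n:ℝ)+3)/2 - k + l))
            - 2*(((n:ℝ)+3)/2 - k + l) * (((n:ℝ)-k-2) * ((n:ℝ)-k+1) / 2))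
        + (L m + R m) * L m
        + (((k:ℝ)-1) * ((((n:ℝ)+1)/2 - k + l)^2 + 2*(n:ℝ)*(((n:ℝ)+1)/2 - k + l))
            - 2*(((n:ℝ)+1)/2 - k + l) * (((k:ℝ)-1) * (2*(n:ℝ)-k) / 2)) := by
    rw [sum_split_s11 n m (fun i => (L i + R i) * L i) h2m hmn, P2, P3]
  have S3 : ∑ i ∈ Finset.range n, (L i + R i)
      = (∑ i ∈ Finset.range n, L i) + (n:ℝ) * ((n:ℝ)+1) := by
    rw [Finset.sum_add_distrib, Srho]
  -- rewrite the goal in terms of range sums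
  have e1 : (∑ i : Fin n, L (i:ℕ)) = ∑ i ∈ Finset.range n, L i :=
    Fin.sum_univ_eq_sum_range L n
  have e2 : (∑ i : Fin n, (L (i:ℕ) + R (i:ℕ)) * L (i:ℕ))
      = ∑ i ∈ Finset.range n, (L i + R i) * L i :=
    Fin.sum_univ_eq_sum_range (fun i => (L i + R i) * L i) n
  have e3 : (∑ i : Fin n, (L (i:ℕ) + R (i:ℕ)))
      = ∑ i ∈ Finset.range n, (L i + R i) :=
    Fin.sum_univ_eq_sum_range (fun i => L i + R i) n
  show (∑ i : Fin n, (L (i:ℕ) + R (i:ℕ)) * L (i:ℕ))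
      - (∑ i : Fin n, (L (i:ℕ) + R (i:ℕ))) * (∑ i : Fin n, L (i:ℕ)) / ((n:ℝ)+1)
      + ((n:ℝ) - 4) * ((n:ℝ) + 1) / 4
      = (((l : ℝ) + 1) + (n : ℝ) - k - ε₁) * (2 * ((l : ℝ) + 1) + (n : ℝ) + 1 - 2 * ε)
        - ((n : ℝ) + 1) * (1 - (ε₁ : ℝ))
  rw [e1, e2, e3, S2, S3, S1, hL0, hL1, hLm, hR0, hR1, hRm]
  rcases hε with rfl | rfl <;> rcases hε₁ with rfl | rfl <;>
    · push_cast
      field_simp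
      ring
end

section
/- Let n ≥ 3 be odd, let k, ε, ε₂, l be integers with 2 ≤ k ≤ n−1, ε ∈ {0,1}, ε₂ ∈ {0,1}, and l ≥ max{ε+ε₂, −(n−5)/2 + k}. In ℝ^n define the bilinear form B(x,y) = Σ_i x_i y_i − (Σ_i x_i)(Σ_i y_i)/(n+1), set ρ = (2n, 2(n−1), …, 2) (i.e. ρ_i = 2(n+1−i)), and let λ = λ⁻(k,ε,ε₂,l) be the vector with first entry (n−1)/2 − k + 2l − ε − ε₂, followed by n−k−1 entries equal to (n−1)/2 − k + l, then one entry equal to (n−3)/2 − k + l + ε, then k−2 entries equal to (n−3)/2 − k + l, and last entry (n−5)/2 − k + l + ε₂. Then B(λ+ρ, λ) + (n−4)(n+1)/4 = ((l−1) + n − k + (1−ε₂))(2(l−1) + n + 1 − 2ε) − (n+1)ε₂. -/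
lemma gaussR (n : ℕ) : ∑ i ∈ Finset.range n, (i:ℝ) = n*(n-1)/2 := by
  induction n with
  | zero => simp
  | succ m ih => rw [Finset.sum_range_succ, ih]; push_cast; ring

lemma sum_affine_range (n : ℕ) (c d : ℝ) :
    ∑ i ∈ Finset.range n, (c + d * i) = n * c + d * ((n:ℝ)*((n:ℝ)-1)/2) := by
  induction n with
  | zero => simp
  | succ m ih => rw [Finset.sum_range_succ, ih]; push_cast; ring

lemma sum_Ico_idR (a b : ℕ) (h : a ≤ b) :
    ∑ i ∈ Finset.Ico a b, (i:ℝ) = ((b:ℝ)*((b:ℝ)-1) - (a:ℝ)*((a:ℝ)-1))/2 := by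
  rw [Finset.sum_Ico_eq_sub _ h, gaussR, gaussR]; ring

lemma split_sum (n k : ℕ) (hk1 : 2 ≤ k) (hkn : k + 1 ≤ n) (f : ℕ → ℝ) :
    ∑ i ∈ Finset.range n, f i
      = f 0 + (∑ i ∈ Finset.Ico 1 (n-k), f i) + f (n-k)
        + (∑ i ∈ Finset.Ico (n-k+1) (n-1), f i) + f (n-1) := by
  have h1 : Finset.Ico 0 1 = {0} := rfl
  have h2 : Finset.Ico (n-k) (n-k+1) = {n-k} := Nat.Ico_succ_singleton _
  have h3 : Finset.Ico (n-1) n = {n-1} := by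
    have := Nat.Ico_succ_singleton (a := n-1)
    rwa [show n - 1 + 1 = n by omega] at this
  rw [Finset.range_eq_Ico,
    ← Finset.sum_Ico_consecutive f (by omega : (0:ℕ) ≤ 1) (by omega : 1 ≤ n),
    ← Finset.sum_Ico_consecutive f (by omega : (1:ℕ) ≤ n - k) (by omega : n - k ≤ n),
    ← Finset.sum_Ico_consecutive f (by omega : n - k ≤ n - k + 1) (by omega : n - k + 1 ≤ n),
    ← Finset.sum_Ico_consecutive f (by omega : n - k + 1 ≤ n - 1) (by omega : n - 1 ≤ n),
    h1, h2, h3, Finset.sum_singleton, Finset.sum_singleton, Finset.sum_singleton]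
  ring

lemma sum_pieces (n k : ℕ) (hk1 : 2 ≤ k) (hkn : k + 1 ≤ n) (f : ℕ → ℝ)
    (A Bc Cc Ec D : ℝ) (h0 : f 0 = A) (h1 : ∀ i ∈ Finset.Ico 1 (n-k), f i = Bc)
    (h2 : f (n-k) = Cc) (h3 : ∀ i ∈ Finset.Ico (n-k+1) (n-1), f i = Ec)
    (h4 : f (n-1) = D) :
    ∑ i ∈ Finset.range n, f i
      = A + ((n:ℝ)-(k:ℝ)-1)*Bc + Cc + ((k:ℝ)-2)*Ec + D := by
  rw [split_sum n k hk1 hkn, h0, h2, h4, Finset.sum_congr rfl h1, Finset.sum_congr rfl h3,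
    Finset.sum_const, Finset.sum_const, Nat.card_Ico, Nat.card_Ico, nsmul_eq_mul, nsmul_eq_mul]
  have c1 : ((n - k - 1 : ℕ) : ℝ) = (n:ℝ) - k - 1 := by
    push_cast [Nat.cast_sub (show k ≤ n by omega), Nat.cast_sub (show 1 ≤ n - k by omega)]; ring
  have c2 : ((n - 1 - (n - k + 1) : ℕ) : ℝ) = (k:ℝ) - 2 := by
    rw [show n - 1 - (n - k + 1) = k - 2 by omega]
    push_cast [Nat.cast_sub (show 2 ≤ k by omega)]; ring
  rw [c1, c2]

lemma sum_pieces_id (n k : ℕ) (hk1 : 2 ≤ k) (hkn : k + 1 ≤ n) (f : ℕ → ℝ)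
    (A Bc Cc Ec D : ℝ) (h0 : f 0 = A) (h1 : ∀ i ∈ Finset.Ico 1 (n-k), f i = Bc)
    (h2 : f (n-k) = Cc) (h3 : ∀ i ∈ Finset.Ico (n-k+1) (n-1), f i = Ec)
    (h4 : f (n-1) = D) :
    ∑ i ∈ Finset.range n, f i * (i:ℝ)
      = Bc * ((((n:ℝ)-k)*((n:ℝ)-k-1) - 0)/2) + (((n:ℝ)-k)) * Cc
        + Ec * ((((n:ℝ)-1)*((n:ℝ)-2) - ((n:ℝ)-k+1)*((n:ℝ)-k))/2) + ((n:ℝ)-1) * D := by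
  have c1 : ((n - k : ℕ) : ℝ) = (n:ℝ) - k := by
    push_cast [Nat.cast_sub (show k ≤ n by omega)]; ring
  have c2 : ((n - 1 : ℕ) : ℝ) = (n:ℝ) - 1 := by
    push_cast [Nat.cast_sub (show 1 ≤ n by omega)]; ring
  have e1 : ∑ i ∈ Finset.Ico 1 (n-k), f i * (i:ℝ)
      = Bc * ∑ i ∈ Finset.Ico 1 (n-k), (i:ℝ) := by
    rw [Finset.mul_sum]; exact Finset.sum_congr rfl (fun i hi => by rw [h1 i hi])
  have e2 : ∑ i ∈ Finset.Ico (n-k+1) (n-1), f i * (i:ℝ)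
      = Ec * ∑ i ∈ Finset.Ico (n-k+1) (n-1), (i:ℝ) := by
    rw [Finset.mul_sum]; exact Finset.sum_congr rfl (fun i hi => by rw [h3 i hi])
  rw [split_sum n k hk1 hkn (fun i => f i * (i:ℝ)), h0, h2, h4, e1, e2,
    sum_Ico_idR 1 (n-k) (by omega), sum_Ico_idR (n-k+1) (n-1) (by omega)]
  push_cast [c1, c2]
  ring

set_option maxHeartbeats 1000000 in
lemma key_s13 (n k : ℕ) (E E2 L : ℝ) (hn3 : 3 ≤ n) (hk1 : 2 ≤ k) (hkn : k + 1 ≤ n)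
    (hE : E = 0 ∨ E = 1) (hE2 : E2 = 0 ∨ E2 = 1) (g : ℕ → ℝ)
    (hg0 : g 0 = ((n:ℝ)-1)/2 - k + 2*L - E - E2)
    (hg1 : ∀ i ∈ Finset.Ico 1 (n-k), g i = ((n:ℝ)-1)/2 - k + L)
    (hg2 : g (n-k) = ((n:ℝ)-3)/2 - k + L + E)
    (hg3 : ∀ i ∈ Finset.Ico (n-k+1) (n-1), g i = ((n:ℝ)-3)/2 - k + L)
    (hg4 : g (n-1) = ((n:ℝ)-5)/2 - k + L + E2) :
    (∑ i ∈ Finset.range n, (g i + 2*((n:ℝ)+1-((i:ℝ)+1))) * g i)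
      - (∑ i ∈ Finset.range n, (g i + 2*((n:ℝ)+1-((i:ℝ)+1))))
        * (∑ i ∈ Finset.range n, g i) / ((n:ℝ)+1)
      + ((n:ℝ)-4)*((n:ℝ)+1)/4
    = ((L - 1) + (n:ℝ) - k + (1 - E2)) * (2*(L-1) + (n:ℝ) + 1 - 2*E) - ((n:ℝ)+1)*E2 := by
  set A : ℝ := ((n:ℝ)-1)/2 - k + 2*L - E - E2 with hA
  set Bc : ℝ := ((n:ℝ)-1)/2 - k + L with hB
  set Cc : ℝ := ((n:ℝ)-3)/2 - k + L + E with hC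
  set Ec : ℝ := ((n:ℝ)-3)/2 - k + L with hE'
  set D : ℝ := ((n:ℝ)-5)/2 - k + L + E2 with hD
  have hT0 := sum_pieces n k hk1 hkn g A Bc Cc Ec D hg0 hg1 hg2 hg3 hg4
  have hQ := sum_pieces n k hk1 hkn (fun i => g i * g i) (A*A) (Bc*Bc) (Cc*Cc) (Ec*Ec) (D*D)
    (by rw [hg0]) (fun i hi => by rw [hg1 i hi])
    (by rw [hg2]) (fun i hi => by rw [hg3 i hi])
    (by rw [hg4])
  have hT1 := sum_pieces_id n k hk1 hkn g A Bc Cc Ec D hg0 hg1 hg2 hg3 hg4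
  have s1 : ∑ i ∈ Finset.range n, (g i + 2*((n:ℝ)+1-((i:ℝ)+1))) * g i
      = (∑ i ∈ Finset.range n, g i * g i) + 2*(n:ℝ)*(∑ i ∈ Finset.range n, g i)
        - 2*(∑ i ∈ Finset.range n, g i * (i:ℝ)) := by
    rw [Finset.mul_sum, Finset.mul_sum, ← Finset.sum_add_distrib, ← Finset.sum_sub_distrib]
    exact Finset.sum_congr rfl fun i _ => by ring
  have s2 : ∑ i ∈ Finset.range n, (g i + 2*((n:ℝ)+1-((i:ℝ)+1)))
      = (∑ i ∈ Finset.range n, g i) + ((n:ℝ)*(n:ℝ)+(n:ℝ)) := by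
    rw [Finset.sum_add_distrib]
    congr 1
    have h : ∑ i ∈ Finset.range n, (2*((n:ℝ)+1-((i:ℝ)+1)))
        = ∑ i ∈ Finset.range n, ((2*(n:ℝ)) + (-2) * (i:ℝ)) :=
      Finset.sum_congr rfl fun i _ => by ring
    rw [h, sum_affine_range]; ring
  rw [s1, s2, hT0, hQ, hT1]
  have hne : (n:ℝ) + 1 ≠ 0 := by positivity
  rcases hE with rfl | rfl <;> rcases hE2 with rfl | rfl <;>
    · simp only [hA, hB, hC, hE', hD]
      field_simp
      ring



/-- On `ℂP^n` with `n` odd, Freudenthal's formula for the highest weight `λ⁻(k,ε,ε₂,l)`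
of an irreducible summand of `(Ker P*)⁻ ⊂ L²(S_{3/2})`, `2 ≤ k ≤ n-1`:
`B(λ+ρ, λ) + (n-4)(n+1)/4 = ((l-1)+n-k+(1-ε₂))(2(l-1)+n+1-2ε) - (n+1)ε₂`. -/
theorem cpn_rs_eigenvalue_minus (n k ε ε₂ l : ℕ) (hn : Odd n) (hn3 : 3 ≤ n)
    (hk1 : 2 ≤ k) (hk2 : k ≤ n - 1) (hε : ε = 0 ∨ ε = 1) (hε₂ : ε₂ = 0 ∨ ε₂ = 1)
    (hl1 : ε + ε₂ ≤ l) (hl2 : (k : ℤ) - ((n : ℤ) - 5) / 2 ≤ (l : ℤ)) :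
    let ρ : Fin n → ℝ := fun i => 2 * ((n : ℝ) + 1 - ((i : ℕ) + 1))
    let lam : Fin n → ℝ := fun i =>
      if (i : ℕ) = 0 then ((n : ℝ) - 1) / 2 - k + 2 * l - ε - ε₂
      else if (i : ℕ) = n - 1 then ((n : ℝ) - 5) / 2 - k + l + ε₂
      else if (i : ℕ) + k < n then ((n : ℝ) - 1) / 2 - k + l
      else if (i : ℕ) + k = n then ((n : ℝ) - 3) / 2 - k + l + ε
      else ((n : ℝ) - 3) / 2 - k + l
    let B : (Fin n → ℝ) → (Fin n → ℝ) → ℝ := fun x y =>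
      (∑ i, x i * y i) - (∑ i, x i) * (∑ i, y i) / ((n : ℝ) + 1)
    B (fun i => lam i + ρ i) lam + ((n : ℝ) - 4) * ((n : ℝ) + 1) / 4
      = (((l : ℝ) - 1) + (n : ℝ) - k + (1 - (ε₂ : ℝ))) * (2 * ((l : ℝ) - 1) + (n : ℝ) + 1 - 2 * ε)
        - ((n : ℝ) + 1) * (ε₂ : ℝ) := by
  intro ρ lam B
  have hkn : k + 1 ≤ n := by omega
  have hE : ((ε:ℝ)) = 0 ∨ ((ε:ℝ)) = 1 := by rcases hε with h | h <;> simp [h]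
  have hE2 : ((ε₂:ℝ)) = 0 ∨ ((ε₂:ℝ)) = 1 := by rcases hε₂ with h | h <;> simp [h]
  set g : ℕ → ℝ := fun i =>
    if i = 0 then ((n : ℝ) - 1) / 2 - k + 2 * l - ε - ε₂
    else if i = n - 1 then ((n : ℝ) - 5) / 2 - k + l + ε₂
    else if i + k < n then ((n : ℝ) - 1) / 2 - k + l
    else if i + k = n then ((n : ℝ) - 3) / 2 - k + l + ε
    else ((n : ℝ) - 3) / 2 - k + l with hgdef
  have hg0 : g 0 = ((n:ℝ)-1)/2 - k + 2*(l:ℝ) - ε - ε₂ := by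
    simp only [hgdef, if_pos rfl]
  have hg1 : ∀ i ∈ Finset.Ico 1 (n-k), g i = ((n:ℝ)-1)/2 - k + (l:ℝ) := by
    intro i hi
    rw [Finset.mem_Ico] at hi
    simp only [hgdef]
    rw [if_neg (by omega), if_neg (by omega), if_pos (by omega)]
  have hg2 : g (n-k) = ((n:ℝ)-3)/2 - k + (l:ℝ) + ε := by
    simp only [hgdef]
    rw [if_neg (by omega), if_neg (by omega), if_neg (by omega), if_pos (by omega)]
  have hg3 : ∀ i ∈ Finset.Ico (n-k+1) (n-1), g i = ((n:ℝ)-3)/2 - k + (l:ℝ) := by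
    intro i hi
    rw [Finset.mem_Ico] at hi
    simp only [hgdef]
    rw [if_neg (by omega), if_neg (by omega), if_neg (by omega), if_neg (by omega)]
  have hg4 : g (n-1) = ((n:ℝ)-5)/2 - k + (l:ℝ) + ε₂ := by
    simp only [hgdef]
    rw [if_neg (by omega), if_pos trivial]
  have hkey := key_s13 n k (ε:ℝ) (ε₂:ℝ) (l:ℝ) hn3 hk1 hkn hE hE2 g hg0 hg1 hg2 hg3 hg4
  show (∑ i : Fin n, (g i + 2*((n:ℝ)+1-(((i:ℕ):ℝ)+1))) * g i)
      - (∑ i : Fin n, (g i + 2*((n:ℝ)+1-(((i:ℕ):ℝ)+1)))) * (∑ i : Fin n, g i) / ((n:ℝ)+1)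
      + ((n:ℝ)-4)*((n:ℝ)+1)/4
    = (((l:ℝ) - 1) + (n:ℝ) - k + (1 - (ε₂:ℝ))) * (2*((l:ℝ)-1) + (n:ℝ) + 1 - 2*(ε:ℝ))
        - ((n:ℝ)+1)*(ε₂:ℝ)
  rw [Fin.sum_univ_eq_sum_range (fun i => (g i + 2*((n:ℝ)+1-((i:ℝ)+1))) * g i) n,
    Fin.sum_univ_eq_sum_range (fun i => (g i + 2*((n:ℝ)+1-((i:ℝ)+1)))) n,
    Fin.sum_univ_eq_sum_range g n]
  exact hkey
end

section
/- Let n ≥ 2, let m ≥ 1, l ≥ 0 and ε ∈ {−3, −1, 1, 3} be integers with l + ε ≥ 0 and n − 1 − l − ε ≥ 0. In ℝ^{n+1} define the bilinear form B(x,y) = (1/(4(n+2))) Σ_i x_i y_i, set ρ = (2(n+1), 2n, …, 2) (i.e. ρ_i = 2(n+2−i)), and let λ = λ(m,l,ε) be the vector with first entry m+l, second entry m, followed by n−1−l−ε entries equal to 1 and l+ε entries equal to 0. Then B(λ+ρ, λ) + (n−2)/4 = (1/(2(n+2))) [ (n+m−ε)(n+m+l+1+ε) − (n + 1/2) + (1/2)(ε−2)(ε+2)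 ]. -/
lemma aux_sum (s : ℕ) (c : ℝ) :
    ∑ i ∈ Finset.range (s + 1), (c - 2 * (i : ℝ)) = (s + 1) * (c - s) := by
  induction s with
  | zero => simp
  | succ s ih =>
    rw [Finset.sum_range_succ, ih]
    push_cast
    ring

lemma aux_filter (k s : ℕ) (hs : s ≤ k) :
    Finset.filter (fun i => i ≤ s) (Finset.range (k + 1)) = Finset.range (s + 1) := by
  ext i; simp only [Finset.mem_filter, Finset.mem_range]; omega

/-- On `ℍP^n = Sp(n+1)/(Sp(1)×Sp(n))`, Freudenthal's formula for the highest weight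
`λ(m,l,ε) = (m+l, m, 1_{n-1-l-ε}, 0_{l+ε})` of an irreducible summand of
`Ker P* ⊂ L²(S_{3/2})`:
`B(λ+ρ, λ) + (n-2)/4 = ((n+m-ε)(n+m+l+1+ε) - (n+1/2) + (ε-2)(ε+2)/2)/(2(n+2))`. -/
theorem hpn_rs_eigenvalue (n m l : ℕ) (ε : ℤ) (hn : 2 ≤ n) (hm : 1 ≤ m)
    (hε : ε = -3 ∨ ε = -1 ∨ ε = 1 ∨ ε = 3)
    (h1 : 0 ≤ (l : ℤ) + ε) (h2 : (l : ℤ) + ε ≤ (n : ℤ) - 1) :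
    let ρ : Fin (n + 1) → ℝ := fun i => 2 * ((n : ℝ) + 2 - ((i : ℕ) + 1))
    let lam : Fin (n + 1) → ℝ := fun i =>
      if (i : ℕ) = 0 then (m : ℝ) + l
      else if (i : ℕ) = 1 then (m : ℝ)
      else if ((i : ℕ) : ℤ) + l + ε ≤ (n : ℤ) then 1
      else 0
    let B : (Fin (n + 1) → ℝ) → (Fin (n + 1) → ℝ) → ℝ := fun x y =>
      (1 / (4 * ((n : ℝ) + 2))) * ∑ i, x i * y i
    B (fun i => lam i + ρ i) lam + ((n : ℝ) - 2) / 4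
      = (1 / (2 * ((n : ℝ) + 2))) * (((n : ℝ) + m - ε) * ((n : ℝ) + m + l + 1 + ε)
          - ((n : ℝ) + 1 / 2) + (1 / 2) * ((ε : ℝ) - 2) * ((ε : ℝ) + 2)) := by
  obtain ⟨k, rfl⟩ : ∃ k, n = k + 2 := ⟨n - 2, by omega⟩
  obtain ⟨t, ht⟩ : ∃ t : ℕ, (t : ℤ) = (l : ℤ) + ε := ⟨((l : ℤ) + ε).toNat, by omega⟩
  have htk : t ≤ k + 1 := by omega
  intro ρ lam B
  simp only [ρ, lam, B]
  rw [Fin.sum_univ_succ, Fin.sum_univ_succ]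
  have key : ∀ i : Fin (k + 1),
      ((if ((i.succ.succ : Fin (k + 2 + 1)) : ℕ) = 0 then (m : ℝ) + l
        else if ((i.succ.succ : Fin (k + 2 + 1)) : ℕ) = 1 then (m : ℝ)
        else if (((i.succ.succ : Fin (k + 2 + 1)) : ℕ) : ℤ) + l + ε ≤ ((k + 2 : ℕ) : ℤ) then 1
        else 0)
        + 2 * (((k + 2 : ℕ) : ℝ) + 2 - (((i.succ.succ : Fin (k + 2 + 1)) : ℕ) + 1)))
      * (if ((i.succ.succ : Fin (k + 2 + 1)) : ℕ) = 0 then (m : ℝ) + l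
        else if ((i.succ.succ : Fin (k + 2 + 1)) : ℕ) = 1 then (m : ℝ)
        else if (((i.succ.succ : Fin (k + 2 + 1)) : ℕ) : ℤ) + l + ε ≤ ((k + 2 : ℕ) : ℤ) then 1
        else 0)
      = if (i : ℕ) + t ≤ k then (2 * (k : ℝ) + 3 - 2 * (i : ℕ)) else 0 := by
    intro i
    simp only [Fin.val_succ]
    rw [if_neg (by omega : ¬ (i : ℕ) + 1 + 1 = 0), if_neg (by omega : ¬ (i : ℕ) + 1 + 1 = 1)]
    have hcond : ((((i : ℕ) + 1 + 1 : ℕ)) : ℤ) + l + ε ≤ ((k + 2 : ℕ) : ℤ) ↔ (i : ℕ) + t ≤ k := by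
      omega
    by_cases hc : (i : ℕ) + t ≤ k
    · rw [if_pos (hcond.mpr hc), if_pos hc]
      push_cast
      ring
    · rw [if_neg (fun h => hc (hcond.mp h)), if_neg hc]
      ring
  rw [Finset.sum_congr rfl (fun i _ => key i)]
  have hsum : (∑ i : Fin (k + 1), if (i : ℕ) + t ≤ k then (2 * (k : ℝ) + 3 - 2 * (i : ℕ)) else 0)
      = ((k : ℝ) + 1 - t) * ((k : ℝ) + 3 + t) := by
    rw [Fin.sum_univ_eq_sum_range (fun i => if i + t ≤ k then (2 * (k : ℝ) + 3 - 2 * i) else 0)]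
    rcases Nat.lt_or_ge k t with hlt | hge
    · have hteq : t = k + 1 := by omega
      rw [Finset.sum_eq_zero (fun i _ => if_neg (by omega))]
      rw [hteq]
      push_cast
      ring
    · have hcong : ∀ i ∈ Finset.range (k + 1),
          (if i + t ≤ k then (2 * (k : ℝ) + 3 - 2 * i) else 0)
          = if i ≤ k - t then (2 * (k : ℝ) + 3 - 2 * i) else 0 := by
        intro i _
        congr 1
        simp only [eq_iff_iff]
        omega
      rw [Finset.sum_congr rfl hcong, ← Finset.sum_filter, aux_filter k (k - t) (by omega),
        aux_sum (k - t) (2 * (k : ℝ) + 3)]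
      have : ((k - t : ℕ) : ℝ) = (k : ℝ) - t := by
        push_cast [Nat.cast_sub hge]
        ring
      rw [this]
      ring
  rw [hsum]
  have hε' : (ε : ℝ) = (t : ℝ) - l := by
    have h : (t : ℝ) = (l : ℝ) + (ε : ℝ) := by exact_mod_cast ht
    linarith
  rw [hε']
  simp only [Fin.val_zero, Fin.val_succ, Fin.isValue]
  norm_num
  have h4 : ((k : ℝ) + 2 + 2) ≠ 0 := by positivity
  push_cast
  field_simp
  ring
end
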